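/- arXiv:1305.5219 — 10 statements merged into one kernel-verified Lean document; each statement's English description precedes it below -/
import Mathlib

section
/- For every t > 0 one has W(t) > ⟨W⟩_t, where ⟨W⟩_t = (1/t)·∫₀^t W(τ) dτ. (Part (i) of the lemma on the iteration class 𝒲.) -/
open Set intervalIntegral

/-- Part (i) of the lemma on the iteration class 𝒲: for every `t > 0`,
`W t` exceeds its average `⟨W⟩_t = (1/t) ∫₀ᵗ W`. -/
theorem iteration_class_avg_lt
    (Vinf γ t₀ : ℝ) (hγ : 0 < γ) (ht₀ : 0 < t₀)
    (h g W : ℝ → ℝ)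
    (hh_cont : ContinuousOn h (Ici 0)) (hg_cont : ContinuousOn g (Ici 0))
    (hh_bdd : ∃ Ch, ∀ t ≥ (0:ℝ), |h t| ≤ Ch)
    (hg_bdd : ∃ Cg, ∀ t ≥ (0:ℝ), |g t| ≤ Cg)
    (hh_pos : ∀ t ≥ (0:ℝ), 0 < h t)
    (hW_lip : ∃ L : NNReal, LipschitzWith L W)
    (hW0 : W 0 = Vinf - γ)
    (hW_mono : StrictMonoOn W (Icc 0 t₀))
    (hW_env : ∀ t ≥ (0:ℝ), γ * h t ≤ Vinf - W t ∧ Vinf - W t < γ * g t)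
    (havg : ∀ t ≥ t₀, g t < (1 / t) * ∫ τ in (0:ℝ)..t, h τ) :
    ∀ t > (0:ℝ), (1 / t) * ∫ τ in (0:ℝ)..t, W τ < W t := by
  obtain ⟨L, hL⟩ := hW_lip
  have hWc : Continuous W := hL.continuous
  intro t ht
  have hWint : IntervalIntegrable W MeasureTheory.volume 0 t :=
    hWc.intervalIntegrable 0 t
  suffices hI : (∫ τ in (0:ℝ)..t, W τ) < t * W t by
    calc (1 / t) * ∫ τ in (0:ℝ)..t, W τ < (1 / t) * (t * W t) := by
          exact mul_lt_mul_of_pos_left hI (by positivity)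
      _ = W t := by field_simp
  rcases le_or_gt t t₀ with hle | hgt
  · -- monotone case
    have key : (0:ℝ) < ∫ τ in (0:ℝ)..t, (W t - W τ) := by
      apply intervalIntegral.intervalIntegral_pos_of_pos_on
      · exact (continuous_const.sub hWc).intervalIntegrable 0 t
      · intro x hx
        have hx' : W x < W t :=
          hW_mono ⟨hx.1.le, hx.2.le.trans hle⟩ ⟨ht.le, hle⟩ hx.2
        linarith
      · exact ht
    rw [intervalIntegral.integral_sub (_root_.intervalIntegrable_const) hWint,
      intervalIntegral.integral_const] at key
    simp only [sub_zero, smul_eq_mul] at key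
    linarith
  · -- envelope case
    have hhint : IntervalIntegrable h MeasureTheory.volume 0 t := by
      apply ContinuousOn.intervalIntegrable
      apply hh_cont.mono
      rw [uIcc_of_le ht.le]
      exact fun x hx => hx.1
    have hA : (∫ τ in (0:ℝ)..t, W τ) ≤ ∫ τ in (0:ℝ)..t, (Vinf - γ * h τ) := by
      apply intervalIntegral.integral_mono_on ht.le hWint
      · exact (_root_.intervalIntegrable_const).sub (hhint.const_mul γ)
      · intro x hx
        have := (hW_env x hx.1).1
        linarith
    have hB : (∫ τ in (0:ℝ)..t, (Vinf - γ * h τ))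
        = t * Vinf - γ * ∫ τ in (0:ℝ)..t, h τ := by
      rw [intervalIntegral.integral_sub (_root_.intervalIntegrable_const) (hhint.const_mul γ),
        intervalIntegral.integral_const, intervalIntegral.integral_const_mul]
      simp [mul_comm]
    have f2 : g t * t < ∫ τ in (0:ℝ)..t, h τ := by
      have := havg t hgt.le
      rw [one_div, inv_mul_eq_div, lt_div_iff₀ ht] at this
      exact this
    have f3 : Vinf - W t < γ * g t := (hW_env t ht.le).2
    nlinarith [mul_lt_mul_of_pos_left f2 hγ, mul_lt_mul_of_pos_left f3 ht]
end

section
/- The function t ↦ ⟨W⟩_t is strictly increasing on (0,∞), and V₀ ≤ ⟨W⟩_t ≤ W(t) ≤ V∞ for all t > 0. (Part (ii) of the lemma on the iteration class 𝒲.) -/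
open Set intervalIntegral

/-- Part (ii) of the lemma on the iteration class 𝒲: the running average
`t ↦ ⟨W⟩_t = (1/t) ∫₀ᵗ W` is strictly increasing on `(0,∞)`, and
`V₀ ≤ ⟨W⟩_t ≤ W t ≤ V∞` for all `t > 0` (here `V₀ = V∞ - γ`). -/
theorem iteration_class_avg_strictMono_and_bounds
    (Vinf γ t₀ : ℝ) (hγ : 0 < γ) (ht₀ : 0 < t₀)
    (h g W : ℝ → ℝ)
    (hh_cont : ContinuousOn h (Ici 0)) (hg_cont : ContinuousOn g (Ici 0))
    (hh_bdd : ∃ Ch, ∀ t ≥ (0:ℝ), |h t| ≤ Ch)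
    (hg_bdd : ∃ Cg, ∀ t ≥ (0:ℝ), |g t| ≤ Cg)
    (hh_pos : ∀ t ≥ (0:ℝ), 0 < h t)
    (hW_lip : ∃ L : NNReal, LipschitzWith L W)
    (hW0 : W 0 = Vinf - γ)
    (hW_mono : StrictMonoOn W (Icc 0 t₀))
    (hW_env : ∀ t ≥ (0:ℝ), γ * h t ≤ Vinf - W t ∧ Vinf - W t < γ * g t)
    (havg : ∀ t ≥ t₀, g t < (1 / t) * ∫ τ in (0:ℝ)..t, h τ) :
    StrictMonoOn (fun t => (1 / t) * ∫ τ in (0:ℝ)..t, W τ) (Ioi 0) ∧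
    ∀ t > (0:ℝ),
      Vinf - γ ≤ (1 / t) * ∫ τ in (0:ℝ)..t, W τ ∧
      (1 / t) * ∫ τ in (0:ℝ)..t, W τ ≤ W t ∧
      W t ≤ Vinf := by
  obtain ⟨L, hL⟩ := hW_lip
  have hWc : Continuous W := hL.continuous
  have hFeq : (fun t => (1 / t) * ∫ τ in (0:ℝ)..t, W τ)
      = fun t => (∫ τ in (0:ℝ)..t, W τ) / t := by
    funext u; rw [one_div, inv_mul_eq_div]
  -- key strict inequality: the integral is strictly below t * W t
  have key : ∀ t > (0:ℝ), (∫ τ in (0:ℝ)..t, W τ) < t * W t := by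
    intro t ht
    rcases le_or_gt t t₀ with hcase | hcase
    · have hmem : t ∈ Icc (0:ℝ) t₀ := ⟨ht.le, hcase⟩
      have hlt : (∫ τ in (0:ℝ)..t, W τ) < ∫ τ in (0:ℝ)..t, W t := by
        apply intervalIntegral.integral_lt_integral_of_continuousOn_of_le_of_exists_lt ht
          hWc.continuousOn continuousOn_const
        · intro x hx
          rcases eq_or_lt_of_le hx.2 with hx' | hx'
          · rw [hx']
          · exact (hW_mono ⟨hx.1.le, hx.2.trans hcase⟩ hmem hx').le
        · exact ⟨0, ⟨le_refl 0, ht.le⟩, hW_mono ⟨le_refl 0, ht₀.le⟩ hmem ht⟩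
      simpa [mul_comm] using hlt
    · set Ih := ∫ τ in (0:ℝ)..t, h τ with hIh
      set Iw := ∫ τ in (0:ℝ)..t, W τ with hIw
      have hInt_h : IntervalIntegrable h MeasureTheory.volume 0 t :=
        (hh_cont.mono (Icc_subset_Ici_self)).intervalIntegrable_of_Icc ht.le
      have hmono : (∫ τ in (0:ℝ)..t, γ * h τ) ≤ ∫ τ in (0:ℝ)..t, (Vinf - W τ) := by
        apply intervalIntegral.integral_mono_on ht.le (hInt_h.const_mul γ)
          ((_root_.intervalIntegrable_const).sub (hWc.intervalIntegrable 0 t))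
        exact fun x hx => (hW_env x hx.1).1
      have hA : γ * Ih ≤ t * Vinf - Iw := by
        have h1 : (∫ τ in (0:ℝ)..t, γ * h τ) = γ * Ih := by
          rw [intervalIntegral.integral_const_mul]
        have h2 : (∫ τ in (0:ℝ)..t, (Vinf - W τ)) = t * Vinf - Iw := by
          rw [intervalIntegral.integral_sub _root_.intervalIntegrable_const
            (hWc.intervalIntegrable 0 t), intervalIntegral.integral_const]
          simp [smul_eq_mul, hIw]
        rw [h1, h2] at hmono; exact hmono
      have hB : t * g t < Ih := by
        have h' := havg t hcase.le
        calc t * g t < t * ((1 / t) * Ih) := by exact (mul_lt_mul_iff_right₀ ht).2 h'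
          _ = Ih := by field_simp
      have hC : Vinf - W t < γ * g t := (hW_env t ht.le).2
      nlinarith [mul_lt_mul_of_pos_left hC ht, mul_lt_mul_of_pos_left hB hγ]
  have hG : ∀ t : ℝ, HasDerivAt (fun u => ∫ τ in (0:ℝ)..u, W τ) (W t) t := fun t =>
    (hWc.integral_hasStrictDerivAt 0 t).hasDerivAt
  -- strict monotonicity of the average
  have hsm : StrictMonoOn (fun t => (∫ τ in (0:ℝ)..t, W τ) / t) (Ioi 0) := by
    apply strictMonoOn_of_deriv_pos (convex_Ioi 0)
    · exact ContinuousOn.div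
        (fun x _ => ((hG x).continuousAt).continuousWithinAt)
        continuousOn_id (fun x hx => ne_of_gt hx)
    · intro t ht'
      rw [interior_Ioi] at ht'
      have ht : 0 < t := ht'
      have hd : HasDerivAt (fun u => (∫ τ in (0:ℝ)..u, W τ) / u)
          ((W t * t - (∫ τ in (0:ℝ)..t, W τ) * 1) / t ^ 2) t :=
        (hG t).div (hasDerivAt_id t) ht.ne'
      rw [hd.deriv]
      have := key t ht
      have ht2 : (0:ℝ) < t ^ 2 := by positivity
      rw [div_pos_iff]
      left
      constructor
      · nlinarith
      · exact ht2
  have hsm' : StrictMonoOn (fun t => (1 / t) * ∫ τ in (0:ℝ)..t, W τ) (Ioi 0) := by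
    rw [hFeq]; exact hsm
  refine ⟨hsm', fun t ht => ?_⟩
  have hlow : Vinf - γ ≤ (∫ τ in (0:ℝ)..t, W τ) / t := by
    have hlim : Filter.Tendsto (fun s => (∫ τ in (0:ℝ)..s, W τ) / s)
        (nhdsWithin 0 (Ioi 0)) (nhds (Vinf - γ)) := by
      have hslope := hasDerivAt_iff_tendsto_slope.1 (hG 0)
      rw [hW0] at hslope
      have hmono : nhdsWithin (0:ℝ) (Ioi 0) ≤ nhdsWithin 0 {0}ᶜ :=
        nhdsWithin_mono 0 (fun x hx => ne_of_gt hx)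
      refine (hslope.mono_left hmono).congr' ?_
      filter_upwards [self_mem_nhdsWithin] with s hs
      have hs0 : (0:ℝ) < s := hs
      simp [slope_def_field, intervalIntegral.integral_same]
    refine le_of_tendsto hlim ?_
    filter_upwards [Ioo_mem_nhdsGT_of_mem ⟨le_refl 0, ht⟩] with s hs
    exact (hsm hs.1 ht hs.2).le
  have hmid : (∫ τ in (0:ℝ)..t, W τ) / t ≤ W t := by
    rw [div_le_iff₀ ht]
    nlinarith [key t ht]
  have hup : W t ≤ Vinf := by
    have h1 := (hW_env t ht.le).1
    have h2 := hh_pos t ht.le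
    nlinarith
  simp only [one_div, inv_mul_eq_div]
  exact ⟨hlow, hmid, hup⟩
end

section
/- For all 0 < s < t one has ⟨W⟩_{s,t} > ⟨W⟩_t, i.e. the average of W over [s,t] strictly exceeds the average of W over [0,t]. (Part (iii) of the lemma on the iteration class 𝒲.) -/
open Set intervalIntegral

/-- Part (iii) of the lemma on the iteration class 𝒲: for all `0 < s < t`,
the average of `W` over `[s,t]` strictly exceeds the average of `W` over `[0,t]`. -/
theorem iteration_class_tail_avg_gt
    (Vinf γ t₀ : ℝ) (hγ : 0 < γ) (ht₀ : 0 < t₀)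
    (h g W : ℝ → ℝ)
    (hh_cont : ContinuousOn h (Ici 0)) (hg_cont : ContinuousOn g (Ici 0))
    (hh_bdd : ∃ Ch, ∀ t ≥ (0:ℝ), |h t| ≤ Ch)
    (hg_bdd : ∃ Cg, ∀ t ≥ (0:ℝ), |g t| ≤ Cg)
    (hh_pos : ∀ t ≥ (0:ℝ), 0 < h t)
    (hW_lip : ∃ L : NNReal, LipschitzWith L W)
    (hW0 : W 0 = Vinf - γ)
    (hW_mono : StrictMonoOn W (Icc 0 t₀))
    (hW_env : ∀ t ≥ (0:ℝ), γ * h t ≤ Vinf - W t ∧ Vinf - W t < γ * g t)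
    (havg : ∀ t ≥ t₀, g t < (1 / t) * ∫ τ in (0:ℝ)..t, h τ) :
    ∀ s t : ℝ, 0 < s → s < t →
      (1 / t) * ∫ τ in (0:ℝ)..t, W τ < (1 / (t - s)) * ∫ τ in s..t, W τ := by
  obtain ⟨L, hL⟩ := hW_lip
  have hWc : Continuous W := hL.continuous
  set A : ℝ → ℝ := fun τ => ∫ x in (0:ℝ)..τ, W x with hAdef
  -- Key pointwise fact: the running integral is strictly below τ * W τ
  have key : ∀ τ : ℝ, 0 < τ → A τ < τ * W τ := by
    intro τ hτ
    rcases le_or_gt τ t₀ with hle | hgt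
    · -- monotone case
      have hpos : 0 < ∫ x in (0:ℝ)..τ, (W τ - W x) := by
        apply intervalIntegral.intervalIntegral_pos_of_pos_on
        · exact ((continuous_const.sub hWc).intervalIntegrable 0 τ)
        · intro x hx
          have := hW_mono ⟨hx.1.le, hx.2.le.trans hle⟩ ⟨hτ.le, hle⟩ hx.2
          linarith
        · exact hτ
      have heq : ∫ x in (0:ℝ)..τ, (W τ - W x) = τ * W τ - A τ := by
        rw [intervalIntegral.integral_sub (intervalIntegrable_const)
          (hWc.intervalIntegrable 0 τ), intervalIntegral.integral_const]
        simp [hAdef]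
      linarith
    · -- tail case
      have hτt₀ : t₀ ≤ τ := hgt.le
      have hInth : IntervalIntegrable h MeasureTheory.volume 0 τ := by
        apply ContinuousOn.intervalIntegrable
        rw [uIcc_of_le hτ.le]
        exact hh_cont.mono (fun x hx => hx.1)
      have hmono : ∫ x in (0:ℝ)..τ, γ * h x ≤ ∫ x in (0:ℝ)..τ, (Vinf - W x) := by
        apply intervalIntegral.integral_mono_on hτ.le
          (hInth.const_mul γ) ((continuous_const.sub hWc).intervalIntegrable 0 τ)
        intro x hx
        exact (hW_env x hx.1).1
      have h1 : ∫ x in (0:ℝ)..τ, γ * h x = γ * ∫ x in (0:ℝ)..τ, h x := by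
        exact intervalIntegral.integral_const_mul γ h
      have h2 : ∫ x in (0:ℝ)..τ, (Vinf - W x) = τ * Vinf - A τ := by
        rw [intervalIntegral.integral_sub (intervalIntegrable_const)
          (hWc.intervalIntegrable 0 τ), intervalIntegral.integral_const]
        simp [hAdef]
      have h3 : g τ < (1 / τ) * ∫ x in (0:ℝ)..τ, h x := havg τ hτt₀
      have h4 : Vinf - W τ < γ * g τ := (hW_env τ hτ.le).2
      set I : ℝ := ∫ x in (0:ℝ)..τ, h x with hIdef
      have h5 : γ * I ≤ τ * Vinf - A τ := by rw [h1, h2] at hmono; exact hmono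
      have h6 : τ * g τ < I := by
        have := (mul_lt_mul_of_pos_left h3 hτ)
        calc τ * g τ < τ * ((1/τ) * I) := this
          _ = I := by field_simp
      nlinarith [mul_lt_mul_of_pos_left h6 hγ, mul_lt_mul_of_pos_left h4 hτ]
  intro s t hs hst
  have ht : 0 < t := hs.trans hst
  have hts : 0 < t - s := by linarith
  have hAderiv : ∀ x : ℝ, HasDerivAt A (W x) x := by
    intro x
    exact intervalIntegral.integral_hasDerivAt_right (hWc.intervalIntegrable 0 x)
      (hWc.stronglyMeasurableAtFilter _ _) hWc.continuousAt
  have hAcont : Continuous A := by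
    rw [continuous_iff_continuousAt]; exact fun x => (hAderiv x).continuousAt
  set G : ℝ → ℝ := fun x => A x / x with hGdef
  have hGderiv : ∀ x : ℝ, x ≠ 0 → HasDerivAt G ((W x * x - A x * 1) / x ^ 2) x := by
    intro x hx
    exact (hAderiv x).div (hasDerivAt_id x) hx
  have hGmono : StrictMonoOn G (Icc s t) := by
    apply strictMonoOn_of_deriv_pos (convex_Icc s t)
    · apply ContinuousOn.div hAcont.continuousOn continuousOn_id
      intro x hx
      exact ne_of_gt (hs.trans_le hx.1)
    · intro x hx
      rw [interior_Icc] at hx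
      have hx0 : 0 < x := hs.trans hx.1
      rw [HasDerivAt.deriv (hGderiv x hx0.ne')]
      have := key x hx0
      have hx2 : 0 < x ^ 2 := by positivity
      apply div_pos _ hx2
      nlinarith
  have hGst : G s < G t := hGmono ⟨le_refl s, hst.le⟩ ⟨hst.le, le_refl t⟩ hst
  have hsplit : A s + ∫ x in s..t, W x = A t :=
    intervalIntegral.integral_add_adjacent_intervals (hWc.intervalIntegrable 0 s)
      (hWc.intervalIntegrable s t)
  have hIst : ∫ x in s..t, W x = A t - A s := by linarith
  rw [hIst]
  have hcross : A s * t < A t * s := by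
    rw [hGdef] at hGst
    exact (div_lt_div_iff₀ hs ht).mp hGst
  rw [show (1/t) * A t = A t / t by ring, show (1/(t-s)) * (A t - A s) = (A t - A s)/(t-s) by ring,
    div_lt_div_iff₀ ht hts]
  nlinarith
end

section
/- Conservation of mass across an end of the cylinder: under the stated hypotheses, ∫_{{v : v₁ ≤ V}} (v₁ − V)·f₋(v) dv + ∫_{{v : v₁ ≥ V}} (v₁ − V)·f₊(v) dv = 0; that is, the particle flux through the right end of the cylinder vanishes. -/
open MeasureTheory Set
open scoped ENNReal

private lemma mp_coord (g : ℝ → ℝ) (hg : MeasurePreserving g volume volume) :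
    MeasurePreserving (fun v : Fin 3 → ℝ => ![g (v 0), v 1, v 2]) volume volume := by
  have h := measurePreserving_pi (fun _ : Fin 3 => (volume : Measure ℝ))
      (fun _ => volume) (f := ![g, id, id]) (fun i => by fin_cases i <;> simp [hg, MeasurePreserving.id])
  have he : (fun v : Fin 3 → ℝ => ![g (v 0), v 1, v 2])
      = fun a i => (![g, id, id] : Fin 3 → (ℝ → ℝ)) i (a i) := by
    funext v i
    fin_cases i <;> rfl
  rw [he, volume_pi]
  exact h

private lemma setLIntegral_comp_mp {T : (Fin 3 → ℝ) → (Fin 3 → ℝ)}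
    (hT : MeasurePreserving T volume volume)
    {A : Set (Fin 3 → ℝ)} (hA : MeasurableSet A) {g : (Fin 3 → ℝ) → ℝ≥0∞} (hg : Measurable g) :
    ∫⁻ v in T ⁻¹' A, g (T v) = ∫⁻ w in A, g w := by
  calc ∫⁻ v in T ⁻¹' A, g (T v) = ∫⁻ v, (T ⁻¹' A).indicator (g ∘ T) v := by
        rw [lintegral_indicator (hT.measurable hA)]; rfl
    _ = ∫⁻ v, (A.indicator g) (T v) := by
        refine lintegral_congr fun v => ?_
        by_cases h : T v ∈ A <;>
          simp [Set.indicator_apply, Set.mem_preimage, h, Function.comp]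
    _ = ∫⁻ w, A.indicator g w := hT.lintegral_comp (hg.indicator hA)
    _ = ∫⁻ w in A, g w := lintegral_indicator hA g

/-- Conservation of mass across the right end of the cylinder: with the mixed
specular/diffuse boundary condition, the particle flux through the end vanishes. -/
theorem mass_conservation_right_end
    (V α : ℝ) (hα0 : 0 ≤ α) (hα1 : α < 1)
    (K : (Fin 3 → ℝ) → (Fin 3 → ℝ) → ℝ)
    (hK_meas : Measurable (fun p : (Fin 3 → ℝ) × (Fin 3 → ℝ) => K p.1 p.2))
    (hK_nonneg : ∀ v u, 0 ≤ K v u)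
    (hK_mass : ∀ u : Fin 3 → ℝ,
      ∫ v in {v : Fin 3 → ℝ | 0 ≤ v 0}, v 0 * K v u = |u 0|)
    (fm fp : (Fin 3 → ℝ) → ℝ)
    (hfm_meas : Measurable fm) (hfm_nonneg : ∀ v, 0 ≤ fm v)
    (hfm_int : Integrable (fun v : Fin 3 → ℝ => (1 + |v 0 - V|) * fm v))
    (hfp_meas : Measurable fp)
    (hfp : ∀ v : Fin 3 → ℝ, V ≤ v 0 →
      fp v = α * fm ![2 * V - v 0, v 1, v 2]
        + (1 - α) * ∫ u in {u : Fin 3 → ℝ | u 0 ≤ V},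
            K ![v 0 - V, v 1, v 2] ![u 0 - V, u 1, u 2] * fm u) :
    (∫ v in {v : Fin 3 → ℝ | v 0 ≤ V}, (v 0 - V) * fm v)
      + ∫ v in {v : Fin 3 → ℝ | V ≤ v 0}, (v 0 - V) * fp v = 0 := by
  classical
  have hα1' : (0:ℝ) ≤ 1 - α := by linarith
  set T : (Fin 3 → ℝ) → (Fin 3 → ℝ) := fun v => ![v 0 - V, v 1, v 2] with hTdef
  set R : (Fin 3 → ℝ) → (Fin 3 → ℝ) := fun v => ![2 * V - v 0, v 1, v 2] with hRdef
  have hT : MeasurePreserving T volume volume :=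
    mp_coord _ (measurePreserving_sub_right volume V)
  have hR : MeasurePreserving R volume volume :=
    mp_coord _ (Measure.measurePreserving_sub_left volume (2*V))
  set Sm : Set (Fin 3 → ℝ) := {v | v 0 ≤ V} with hSmdef
  set Sp : Set (Fin 3 → ℝ) := {v | V ≤ v 0} with hSpdef
  set A0 : Set (Fin 3 → ℝ) := {v | 0 ≤ v 0} with hA0def
  have hSm : MeasurableSet Sm := measurableSet_le (measurable_pi_apply 0) measurable_const
  have hSp : MeasurableSet Sp := measurableSet_le measurable_const (measurable_pi_apply 0)
  have hA0 : MeasurableSet A0 := measurableSet_le measurable_const (measurable_pi_apply 0)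
  have hTpre : T ⁻¹' A0 = Sp := by
    ext v
    simp only [hTdef, hA0def, hSpdef, Set.mem_preimage, Set.mem_setOf_eq, Matrix.cons_val_zero]
    constructor <;> intro h <;> linarith
  have hRpre : R ⁻¹' Sm = Sp := by
    ext v
    simp only [hRdef, hSmdef, hSpdef, Set.mem_preimage, Set.mem_setOf_eq, Matrix.cons_val_zero]
    constructor <;> intro h <;> linarith
  set L : ℝ≥0∞ := ∫⁻ v in Sm, ENNReal.ofReal ((V - v 0) * fm v) with hLdef
  have hL_ne_top : L ≠ ∞ := by
    have h1 : L ≤ ∫⁻ v, ENNReal.ofReal ((1 + |v 0 - V|) * fm v) := by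
      refine le_trans (setLIntegral_le_lintegral _ _) (lintegral_mono fun v => ?_)
      refine ENNReal.ofReal_le_ofReal (mul_le_mul_of_nonneg_right ?_ (hfm_nonneg v))
      have h := le_abs_self (V - v 0)
      rw [abs_sub_comm] at h
      linarith
    have h2 : (∫⁻ v, ENNReal.ofReal ((1 + |v 0 - V|) * fm v)) < ∞ :=
      lt_of_le_of_lt (lintegral_ofReal_le_lintegral_enorm _) hfm_int.2
    exact (lt_of_le_of_lt h1 h2).ne
  -- specular term
  have hspec : ∫⁻ v in Sp, ENNReal.ofReal ((v 0 - V) * fm (R v)) = L := by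
    have hg : Measurable fun w : Fin 3 → ℝ => ENNReal.ofReal ((V - w 0) * fm w) :=
      ((measurable_const.sub (measurable_pi_apply 0)).mul hfm_meas).ennreal_ofReal
    have h := setLIntegral_comp_mp hR hSm hg
    rw [hRpre] at h
    rw [hLdef, ← h]
    refine setLIntegral_congr_fun_ae hSp (ae_of_all _ fun v hv => ?_)
    have hR0 : R v 0 = 2 * V - v 0 := rfl
    congr 1
    rw [hR0]
    ring
  -- inner integral for the diffuse term
  have hinner : ∀ u : Fin 3 → ℝ, u 0 < V →
      ∫⁻ v in Sp, ENNReal.ofReal ((v 0 - V) * K (T v) (T u)) = ENNReal.ofReal (V - u 0) := by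
    intro u hu
    have hKu : ∫ w in A0, w 0 * K w (T u) = V - u 0 := by
      have h := hK_mass (T u)
      rw [show T u 0 = u 0 - V from rfl] at h
      rw [abs_of_neg (by linarith : u 0 - V < 0), neg_sub] at h
      exact h
    have hKmeas_u : Measurable fun w => K w (T u) :=
      hK_meas.comp (measurable_id.prodMk measurable_const)
    have hint : Integrable (fun w => w 0 * K w (T u)) (volume.restrict A0) := by
      by_contra hni
      rw [integral_undef hni] at hKu
      linarith
    have hnn : 0 ≤ᵐ[volume.restrict A0] fun w => w 0 * K w (T u) :=
      (ae_restrict_iff' hA0).2 (ae_of_all _ fun w hw =>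
        mul_nonneg hw (hK_nonneg _ _))
    have h1 : ENNReal.ofReal (V - u 0) = ∫⁻ w in A0, ENNReal.ofReal (w 0 * K w (T u)) := by
      rw [← hKu]
      exact ofReal_integral_eq_lintegral_ofReal hint hnn
    have hg : Measurable fun w : Fin 3 → ℝ => ENNReal.ofReal (w 0 * K w (T u)) :=
      ((measurable_pi_apply 0).mul hKmeas_u).ennreal_ofReal
    have h2 := setLIntegral_comp_mp hT hA0 hg
    rw [hTpre] at h2
    rw [h1, ← h2]
    rfl
  -- measurability of things
  have hKT : Measurable fun p : (Fin 3 → ℝ) × (Fin 3 → ℝ) => K (T p.1) (T p.2) :=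
    hK_meas.comp ((hT.measurable.comp measurable_fst).prodMk (hT.measurable.comp measurable_snd))
  set Lam : (Fin 3 → ℝ) → ℝ≥0∞ :=
    fun v => ∫⁻ u in Sm, ENNReal.ofReal (K (T v) (T u) * fm u) with hLamdef
  have hLam_meas : Measurable Lam :=
    Measurable.lintegral_prod_right' (ν := volume.restrict Sm)
      ((hKT.mul (hfm_meas.comp measurable_snd)).ennreal_ofReal)
  -- a.e. u in Sm has u 0 ≠ V
  have hnull : volume {u : Fin 3 → ℝ | u 0 = V} = 0 := by
    have hset : {u : Fin 3 → ℝ | u 0 = V}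
        = Set.pi Set.univ (fun i => if i = 0 then ({V} : Set ℝ) else Set.univ) := by
      ext u
      simp only [Set.mem_setOf_eq, Set.mem_pi, Set.mem_univ, forall_true_left]
      constructor
      · intro h i
        fin_cases i <;> simp [h]
      · intro h
        simpa using h 0
    rw [hset, volume_pi, Measure.pi_pi]
    refine Finset.prod_eq_zero (Finset.mem_univ 0) ?_
    simp
  have hae_ne : ∀ᵐ u ∂(volume.restrict Sm), u 0 ≠ V := by
    refine ae_restrict_of_ae ?_
    rw [ae_iff]
    simpa only [ne_eq, not_not] using hnull
  -- diffuse term with Lam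
  have hdiff' : ∫⁻ v in Sp, ENNReal.ofReal (v 0 - V) * Lam v = L := by
    have hmeas_joint : AEMeasurable
        (fun z : (Fin 3 → ℝ) × (Fin 3 → ℝ) =>
          ENNReal.ofReal (z.1 0 - V) * ENNReal.ofReal (K (T z.1) (T z.2) * fm z.2))
        ((volume.restrict Sp).prod (volume.restrict Sm)) :=
      ((((measurable_pi_apply 0).comp measurable_fst).sub measurable_const).ennreal_ofReal.mul
        ((hKT.mul (hfm_meas.comp measurable_snd)).ennreal_ofReal)).aemeasurable
    calc ∫⁻ v in Sp, ENNReal.ofReal (v 0 - V) * Lam v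
        = ∫⁻ v in Sp, ∫⁻ u in Sm,
            ENNReal.ofReal (v 0 - V) * ENNReal.ofReal (K (T v) (T u) * fm u) := by
          refine lintegral_congr fun v => ?_
          rw [hLamdef]
          exact (lintegral_const_mul' _ _ ENNReal.ofReal_ne_top).symm
      _ = ∫⁻ u in Sm, ∫⁻ v in Sp,
            ENNReal.ofReal (v 0 - V) * ENNReal.ofReal (K (T v) (T u) * fm u) :=
          lintegral_lintegral_swap hmeas_joint
      _ = L := by
          rw [hLdef]
          refine lintegral_congr_ae ?_
          filter_upwards [hae_ne, ae_restrict_mem hSm] with u hne hu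
          have hu' : u 0 < V := lt_of_le_of_ne hu hne
          calc ∫⁻ v in Sp, ENNReal.ofReal (v 0 - V) * ENNReal.ofReal (K (T v) (T u) * fm u)
              = ∫⁻ v in Sp, ENNReal.ofReal ((v 0 - V) * K (T v) (T u)) * ENNReal.ofReal (fm u) := by
                refine setLIntegral_congr_fun_ae hSp (ae_of_all _ fun v hv => ?_)
                rw [ENNReal.ofReal_mul (hK_nonneg _ _), ← mul_assoc,
                  ← ENNReal.ofReal_mul (sub_nonneg.2 hv)]
            _ = (∫⁻ v in Sp, ENNReal.ofReal ((v 0 - V) * K (T v) (T u)))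
                  * ENNReal.ofReal (fm u) := lintegral_mul_const' _ _ ENNReal.ofReal_ne_top
            _ = ENNReal.ofReal (V - u 0) * ENNReal.ofReal (fm u) := by rw [hinner u hu']
            _ = ENNReal.ofReal ((V - u 0) * fm u) := by
                rw [← ENNReal.ofReal_mul (by linarith : (0:ℝ) ≤ V - u 0)]
  set J : (Fin 3 → ℝ) → ℝ := fun v => ∫ u in Sm, K (T v) (T u) * fm u with hJdef
  have hJ_eq : ∀ v, J v = (Lam v).toReal := by
    intro v
    rw [hJdef, hLamdef]
    exact integral_eq_lintegral_of_nonneg_ae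
      (ae_of_all _ fun u => mul_nonneg (hK_nonneg _ _) (hfm_nonneg u))
      ((hK_meas.comp (measurable_const.prodMk hT.measurable)).mul hfm_meas).aestronglyMeasurable
  have hJ_nonneg : ∀ v, 0 ≤ J v := fun v =>
    setIntegral_nonneg hSm fun u _ => mul_nonneg (hK_nonneg _ _) (hfm_nonneg u)
  have hae_lt : ∀ᵐ v ∂(volume.restrict Sp), ENNReal.ofReal (v 0 - V) * Lam v < ∞ :=
    ae_lt_top ((((measurable_pi_apply 0).sub measurable_const).ennreal_ofReal).mul hLam_meas)
      (by rw [hdiff']; exact hL_ne_top)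
  have hdiff : ∫⁻ v in Sp, ENNReal.ofReal ((v 0 - V) * J v) = L := by
    rw [← hdiff']
    refine lintegral_congr_ae ?_
    filter_upwards [hae_lt, ae_restrict_mem hSp] with v hlt hv
    have hv' : V ≤ v 0 := hv
    rcases eq_or_lt_of_le hv' with h | h
    · have h0 : v 0 - V = 0 := by linarith
      simp [h0]
    · have hΛ : Lam v ≠ ∞ := by
        intro htop
        rw [htop, ENNReal.mul_top (ENNReal.ofReal_pos.2 (by linarith)).ne'] at hlt
        exact absurd hlt (lt_irrefl _)
      rw [ENNReal.ofReal_mul (by linarith : (0:ℝ) ≤ v 0 - V), hJ_eq v,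
        ENNReal.ofReal_toReal hΛ]
  -- final assembly
  have hfp' : ∀ v ∈ Sp, fp v = α * fm (R v) + (1 - α) * J v := fun v hv => hfp v hv
  have hfp_nonneg : ∀ v ∈ Sp, 0 ≤ fp v := fun v hv => by
    rw [hfp' v hv]
    have := hJ_nonneg v
    have := hfm_nonneg (R v)
    positivity
  have hright : ∫ v in Sp, (v 0 - V) * fp v = L.toReal := by
    have hnn : 0 ≤ᵐ[volume.restrict Sp] fun v => (v 0 - V) * fp v :=
      (ae_restrict_iff' hSp).2 (ae_of_all _ fun v hv =>
        mul_nonneg (sub_nonneg.2 hv) (hfp_nonneg v hv))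
    rw [integral_eq_lintegral_of_nonneg_ae hnn
      (((measurable_pi_apply 0).sub measurable_const).mul hfp_meas).aestronglyMeasurable]
    congr 1
    have hmeas1 : Measurable fun v : Fin 3 → ℝ =>
        ENNReal.ofReal (α * ((v 0 - V) * fm (R v))) :=
      (measurable_const.mul (((measurable_pi_apply 0).sub measurable_const).mul
        (hfm_meas.comp hR.measurable))).ennreal_ofReal
    calc ∫⁻ v in Sp, ENNReal.ofReal ((v 0 - V) * fp v)
        = ∫⁻ v in Sp, (ENNReal.ofReal (α * ((v 0 - V) * fm (R v)))
            + ENNReal.ofReal ((1 - α) * ((v 0 - V) * J v))) := by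
          refine setLIntegral_congr_fun_ae hSp (ae_of_all _ fun v hv => ?_)
          have h1 : (0:ℝ) ≤ α * ((v 0 - V) * fm (R v)) :=
            mul_nonneg hα0 (mul_nonneg (sub_nonneg.2 hv) (hfm_nonneg _))
          have h2 : (0:ℝ) ≤ (1 - α) * ((v 0 - V) * J v) :=
            mul_nonneg hα1' (mul_nonneg (sub_nonneg.2 hv) (hJ_nonneg v))
          rw [← ENNReal.ofReal_add h1 h2]
          congr 1
          rw [hfp' v hv]
          ring
      _ = (∫⁻ v in Sp, ENNReal.ofReal (α * ((v 0 - V) * fm (R v))))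
            + ∫⁻ v in Sp, ENNReal.ofReal ((1 - α) * ((v 0 - V) * J v)) :=
          lintegral_add_left hmeas1 _
      _ = ENNReal.ofReal α * L + ENNReal.ofReal (1 - α) * L := by
          congr 1
          · simp_rw [ENNReal.ofReal_mul hα0]
            rw [lintegral_const_mul' _ _ ENNReal.ofReal_ne_top, hspec]
          · simp_rw [ENNReal.ofReal_mul hα1']
            rw [lintegral_const_mul' _ _ ENNReal.ofReal_ne_top, hdiff]
      _ = L := by
          rw [← add_mul, ← ENNReal.ofReal_add hα0 hα1']
          norm_num
  have hleft : ∫ v in Sm, (v 0 - V) * fm v = -L.toReal := by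
    have h1 : ∫ v in Sm, (v 0 - V) * fm v = - ∫ v in Sm, (V - v 0) * fm v := by
      rw [← integral_neg]
      congr 1
      funext v
      ring
    have hnn : 0 ≤ᵐ[volume.restrict Sm] fun v => (V - v 0) * fm v :=
      (ae_restrict_iff' hSm).2 (ae_of_all _ fun v hv =>
        mul_nonneg (sub_nonneg.2 hv) (hfm_nonneg v))
    rw [h1, integral_eq_lintegral_of_nonneg_ae hnn
      ((measurable_const.sub (measurable_pi_apply 0)).mul hfm_meas).aestronglyMeasurable, ← hLdef]
  rw [hleft, hright]
  ring
end

section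
/- Vanishing of the lateral force: under the stated symmetry hypotheses, for every V ∈ ℝ one has ∫_{{v : v·n ≤ 0}} (v·n)·(v₁ − V)·f₀(v) dv + ∫_{{v : v·n ≥ 0}} (v·n)·(v₁ − V)·f₊(v) dv = 0; that is, the horizontal force contribution at a point of the lateral boundary is zero. -/
open MeasureTheory Set
open scoped RealInnerProductSpace

section Aux

variable {E : Type*} [NormedAddCommGroup E] [InnerProductSpace ℝ E]

/-- The reflection `v ↦ v - 2⟪v,a⟫ a` as a linear map. -/
noncomputable def reflLinMap (a : E) : E →ₗ[ℝ] E where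
  toFun v := v - (2 * ⟪v, a⟫) • a
  map_add' x y := by
    simp only [inner_add_left, mul_add, add_smul]
    abel
  map_smul' c x := by
    simp only [real_inner_smul_left, smul_sub, smul_smul, RingHom.id_apply]
    rw [mul_left_comm]

lemma reflLinMap_involutive (a : E) (ha : ‖a‖ = 1) :
    Function.Involutive (reflLinMap a) := by
  intro v
  have haa : ⟪a, a⟫ = (1 : ℝ) := by rw [real_inner_self_eq_norm_sq, ha]; norm_num
  show (v - (2 * ⟪v, a⟫) • a) - (2 * ⟪v - (2 * ⟪v, a⟫) • a, a⟫) • a = v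
  rw [inner_sub_left, real_inner_smul_left, haa]
  have : (2 * (⟪v, a⟫ - 2 * ⟪v, a⟫ * 1)) = -(2 * ⟪v, a⟫) := by ring
  rw [this, neg_smul, sub_neg_eq_add, sub_add_cancel]

/-- The reflection `v ↦ v - 2⟪v,a⟫ a` (for a unit vector `a`) as a linear isometry
equivalence. -/
noncomputable def reflIso (a : E) (ha : ‖a‖ = 1) : E ≃ₗᵢ[ℝ] E :=
  { LinearEquiv.ofInvolutive (reflLinMap a) (reflLinMap_involutive a ha) with
    norm_map' := by
      intro v
      have haa : ⟪a, a⟫ = (1 : ℝ) := by rw [real_inner_self_eq_norm_sq, ha]; norm_num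
      have h2 : ‖v - (2 * ⟪v, a⟫) • a‖ ^ 2 = ‖v‖ ^ 2 := by
        rw [norm_sub_sq_real, real_inner_smul_right, norm_smul]
        have : ‖(2 * ⟪v, a⟫ : ℝ)‖ ^ 2 = (2 * ⟪v, a⟫) ^ 2 := sq_abs _
        rw [mul_pow, this, ha]
        ring
      exact (sq_eq_sq₀ (norm_nonneg _) (norm_nonneg _)).mp h2 }

lemma reflIso_apply (a : E) (ha : ‖a‖ = 1) (v : E) :
    reflIso a ha v = v - (2 * ⟪v, a⟫) • a := rfl

lemma inner_reflIso (a : E) (ha : ‖a‖ = 1) (v b : E) :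
    ⟪reflIso a ha v, b⟫ = ⟪v, b⟫ - 2 * ⟪v, a⟫ * ⟪a, b⟫ := by
  rw [reflIso_apply, inner_sub_left, real_inner_smul_left]

/-- The key elementary bound used for domination. -/
lemma bound_aux {a t V M b : ℝ} (ha : 0 ≤ a) (hb : 0 ≤ b) (hM1 : 1 ≤ M)
    (hMV : |V| ≤ M) : a * |t - V| * b ≤ M * (a * (1 + |t|) * b) := by
  have h1 : |t - V| ≤ M * (1 + |t|) := by
    have h2 : |t - V| ≤ |t| + |V| := abs_sub t V
    nlinarith [abs_nonneg t, mul_nonneg (sub_nonneg.mpr hM1) (abs_nonneg t)]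
  calc a * |t - V| * b ≤ a * (M * (1 + |t|)) * b := by
        exact mul_le_mul_of_nonneg_right (mul_le_mul_of_nonneg_left h1 ha) hb
    _ = M * (a * (1 + |t|) * b) := by ring

end Aux

section Aux3

local notation "E3" => EuclideanSpace ℝ (Fin 3)

/-- Change of variables along a reflection preserving a set. -/
lemma reflect_setIntegral (e : E3 ≃ₗᵢ[ℝ] E3) (s : Set E3) (hs : e ⁻¹' s = s)
    (g : E3 → ℝ) : ∫ v in s, g (e v) = ∫ v in s, g v := by
  conv_lhs => rw [← hs]
  exact e.measurePreserving.setIntegral_preimage_emb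
    e.toHomeomorph.measurableEmbedding g s

lemma reflect_integrableOn (e : E3 ≃ₗᵢ[ℝ] E3) {s : Set E3} (hs : e ⁻¹' s = s)
    (hsm : MeasurableSet s) (g : E3 → ℝ) (hg : IntegrableOn g s) :
    IntegrableOn (fun v => g (e v)) s := by
  have h := ((e.measurePreserving.restrict_preimage hsm).integrable_comp_emb
    e.toHomeomorph.measurableEmbedding).mpr hg
  rw [hs] at h
  exact (Function.comp_def g ⇑e) ▸ h

end Aux3

set_option maxHeartbeats 4000000 in
/-- Vanishing of the lateral force: under the symmetry hypotheses on the lateral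
collision kernel and the initial density, the horizontal force contribution at a
point of the lateral boundary is zero, for every horizontal speed `V`. -/
theorem lateral_force_vanishes
    (i T n : EuclideanSpace ℝ (Fin 3))
    (hi : i = EuclideanSpace.single 0 1)
    (hON : Orthonormal ℝ ![i, T, n])
    (αS : ℝ) (hα0 : 0 ≤ αS) (hα1 : αS ≤ 1)
    (KS : EuclideanSpace ℝ (Fin 3) → EuclideanSpace ℝ (Fin 3) → ℝ)
    (hK_meas : Measurable
      (fun p : EuclideanSpace ℝ (Fin 3) × EuclideanSpace ℝ (Fin 3) => KS p.1 p.2))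
    (hK_nonneg : ∀ v u, 0 ≤ KS v u)
    (hK_even : ∀ v u : EuclideanSpace ℝ (Fin 3), KS (v - (2 * ⟪v, i⟫) • i) u = KS v u)
    (hK_mass : ∀ u : EuclideanSpace ℝ (Fin 3), ⟪u, n⟫ ≤ 0 →
      ∫ v in {v : EuclideanSpace ℝ (Fin 3) | 0 ≤ ⟪v, n⟫}, ⟪v, n⟫ * KS v u = |⟪u, n⟫|)
    (f₀ fp : EuclideanSpace ℝ (Fin 3) → ℝ)
    (hf₀_meas : Measurable f₀) (hf₀_nonneg : ∀ v, 0 ≤ f₀ v)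
    (hf₀_even : ∀ v : EuclideanSpace ℝ (Fin 3), f₀ (v - (2 * ⟪v, i⟫) • i) = f₀ v)
    (hf₀_int : Integrable
      (fun v : EuclideanSpace ℝ (Fin 3) => |⟪v, n⟫| * (1 + |⟪v, i⟫|) * f₀ v))
    (hKf_int : IntegrableOn
      (fun p : EuclideanSpace ℝ (Fin 3) × EuclideanSpace ℝ (Fin 3) =>
        ⟪p.1, n⟫ * (1 + |⟪p.1, i⟫|) * KS p.1 p.2 * f₀ p.2)
      ({v : EuclideanSpace ℝ (Fin 3) | 0 ≤ ⟪v, n⟫} ×ˢ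
        {u : EuclideanSpace ℝ (Fin 3) | ⟪u, n⟫ ≤ 0}))
    (fp_def : ∀ v : EuclideanSpace ℝ (Fin 3), 0 ≤ ⟪v, n⟫ →
      fp v = αS * f₀ (v - (2 * ⟪v, n⟫) • n)
        + (1 - αS) * ∫ u in {u : EuclideanSpace ℝ (Fin 3) | ⟪u, n⟫ ≤ 0}, KS v u * f₀ u) :
    ∀ V : ℝ,
      (∫ v in {v : EuclideanSpace ℝ (Fin 3) | ⟪v, n⟫ ≤ 0}, ⟪v, n⟫ * (⟪v, i⟫ - V) * f₀ v)
        + ∫ v in {v : EuclideanSpace ℝ (Fin 3) | 0 ≤ ⟪v, n⟫}, ⟪v, n⟫ * (⟪v, i⟫ - V) * fp v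
      = 0 := by
  intro V
  classical
  -- Basic consequences of orthonormality
  have hii : ‖i‖ = 1 := by simpa using hON.1 0
  have hnn : ‖n‖ = 1 := by simpa using hON.1 2
  have hin : ⟪i, n⟫ = 0 := by
    have h := hON.2 (show (0 : Fin 3) ≠ 2 by decide)
    simpa using h
  have hni : ⟪n, i⟫ = 0 := by rw [real_inner_comm]; exact hin
  have hiinner : ⟪i, i⟫ = (1 : ℝ) := by
    rw [real_inner_self_eq_norm_sq, hii]; norm_num
  have hninner : ⟪n, n⟫ = (1 : ℝ) := by
    rw [real_inner_self_eq_norm_sq, hnn]; norm_num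
  set Sp : Set (EuclideanSpace ℝ (Fin 3)) := {v | 0 ≤ ⟪v, n⟫} with hSp_def
  set Sm : Set (EuclideanSpace ℝ (Fin 3)) := {v | ⟪v, n⟫ ≤ 0} with hSm_def
  have mN : Measurable fun v : EuclideanSpace ℝ (Fin 3) => ⟪v, n⟫ :=
    (continuous_id.inner continuous_const).measurable
  have mI : Measurable fun v : EuclideanSpace ℝ (Fin 3) => ⟪v, i⟫ :=
    (continuous_id.inner continuous_const).measurable
  have hSpm : MeasurableSet Sp := measurableSet_le measurable_const mN
  have hSmm : MeasurableSet Sm := measurableSet_le mN measurable_const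
  set Si := reflIso i hii with hSi_def
  set Rn := reflIso n hnn with hRn_def
  have hSii : ∀ v, ⟪Si v, i⟫ = -⟪v, i⟫ := fun v => by
    rw [hSi_def, inner_reflIso, hiinner]; ring
  have hSin : ∀ v, ⟪Si v, n⟫ = ⟪v, n⟫ := fun v => by
    rw [hSi_def, inner_reflIso, hin]; ring
  have hRnn : ∀ v, ⟪Rn v, n⟫ = -⟪v, n⟫ := fun v => by
    rw [hRn_def, inner_reflIso, hninner]; ring
  have hRni : ∀ v, ⟪Rn v, i⟫ = ⟪v, i⟫ := fun v => by
    rw [hRn_def, inner_reflIso, hni]; ring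
  have hSipre_p : ⇑Si ⁻¹' Sp = Sp := by
    ext v; simp only [Set.mem_preimage, hSp_def, Set.mem_setOf_eq, hSin v]
  have hSipre_m : ⇑Si ⁻¹' Sm = Sm := by
    ext v; simp only [Set.mem_preimage, hSm_def, Set.mem_setOf_eq, hSin v]
  have hRnpre : ⇑Rn ⁻¹' Sm = Sp := by
    ext v
    simp only [Set.mem_preimage, hSm_def, hSp_def, Set.mem_setOf_eq, hRnn v]
    exact neg_nonpos
  set M : ℝ := max 1 |V| with hM_def
  have hM1 : 1 ≤ M := le_max_left _ _
  have hMV : |V| ≤ M := le_max_right _ _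
  -- Integrability of the main integrand on Sm
  have hg_meas : Measurable fun v : EuclideanSpace ℝ (Fin 3) =>
      ⟪v, n⟫ * (⟪v, i⟫ - V) * f₀ v :=
    (mN.mul (mI.sub measurable_const)).mul hf₀_meas
  have hg_int : IntegrableOn
      (fun v : EuclideanSpace ℝ (Fin 3) => ⟪v, n⟫ * (⟪v, i⟫ - V) * f₀ v) Sm := by
    refine Integrable.mono' ((hf₀_int.const_mul M).integrableOn)
      hg_meas.aestronglyMeasurable ?_
    filter_upwards with v
    have h1 : ‖⟪v, n⟫ * (⟪v, i⟫ - V) * f₀ v‖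
        = |⟪v, n⟫| * |⟪v, i⟫ - V| * f₀ v := by
      rw [Real.norm_eq_abs, abs_mul, abs_mul, abs_of_nonneg (hf₀_nonneg v)]
    rw [h1]
    exact bound_aux (abs_nonneg _) (hf₀_nonneg v) hM1 hMV
  set c : ℝ := ∫ v in Sm, ⟪v, n⟫ * f₀ v with hc_def
  -- Step A: the incoming integral
  have hA : ∫ v in Sm, ⟪v, n⟫ * (⟪v, i⟫ - V) * f₀ v = -V * c := by
    have hgSi : IntegrableOn
        (fun v => (fun w => ⟪w, n⟫ * (⟪w, i⟫ - V) * f₀ w) (Si v)) Sm :=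
      reflect_integrableOn Si hSipre_m hSmm (fun w => ⟪w, n⟫ * (⟪w, i⟫ - V) * f₀ w) hg_int
    have e1 : ∫ v in Sm, (fun w => ⟪w, n⟫ * (⟪w, i⟫ - V) * f₀ w) (Si v)
        = ∫ v in Sm, (fun w => ⟪w, n⟫ * (⟪w, i⟫ - V) * f₀ w) v :=
      reflect_setIntegral Si Sm hSipre_m (fun w => ⟪w, n⟫ * (⟪w, i⟫ - V) * f₀ w)
    have e2 : ∀ v, ⟪v, n⟫ * (⟪v, i⟫ - V) * f₀ v
          + (fun w => ⟪w, n⟫ * (⟪w, i⟫ - V) * f₀ w) (Si v)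
        = -(2 * V) * (⟪v, n⟫ * f₀ v) := by
      intro v
      have hf : f₀ (Si v) = f₀ v := by
        rw [hSi_def, reflIso_apply]; exact hf₀_even v
      simp only [hSin v, hSii v, hf]
      ring
    have e3 : (∫ v in Sm, ⟪v, n⟫ * (⟪v, i⟫ - V) * f₀ v)
          + ∫ v in Sm, (fun w => ⟪w, n⟫ * (⟪w, i⟫ - V) * f₀ w) (Si v)
        = -(2 * V) * c := by
      rw [← integral_add hg_int hgSi, hc_def, ← integral_const_mul]
      exact setIntegral_congr_fun hSmm fun v _ => e2 v
    linarith [e1, e3]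
  -- Step B: the specular part
  have hB_int : IntegrableOn
      (fun v => ⟪v, n⟫ * (⟪v, i⟫ - V) * f₀ (Rn v)) Sp := by
    have h0 : IntegrableOn (fun w => -(⟪w, n⟫ * (⟪w, i⟫ - V) * f₀ w)) Sm := hg_int.neg
    have h := ((Rn.measurePreserving.restrict_preimage hSmm).integrable_comp_emb
      Rn.toHomeomorph.measurableEmbedding).mpr h0
    rw [hRnpre] at h
    refine h.congr ?_
    filter_upwards with v
    simp only [Function.comp_apply, hRnn v, hRni v]
    ring
  have hB : ∫ v in Sp, ⟪v, n⟫ * (⟪v, i⟫ - V) * f₀ (Rn v) = V * c := by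
    have e1 : ∀ v ∈ Sp, ⟪v, n⟫ * (⟪v, i⟫ - V) * f₀ (Rn v)
        = (fun w => -(⟪w, n⟫ * (⟪w, i⟫ - V) * f₀ w)) (Rn v) := by
      intro v _
      simp only [hRnn v, hRni v]
      ring
    have hcov := Rn.measurePreserving.setIntegral_preimage_emb
      Rn.toHomeomorph.measurableEmbedding
      (fun w => -(⟪w, n⟫ * (⟪w, i⟫ - V) * f₀ w)) Sm
    rw [setIntegral_congr_fun hSpm e1, ← hRnpre, hcov, integral_neg, hA]
    ring
  -- Step C/D: the diffusive part
  set F : EuclideanSpace ℝ (Fin 3) × EuclideanSpace ℝ (Fin 3) → ℝ :=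
    fun p => ⟪p.1, n⟫ * (⟪p.1, i⟫ - V) * KS p.1 p.2 * f₀ p.2 with hF_def
  have hprod : (volume.restrict Sp).prod (volume.restrict Sm)
      = (volume : Measure
          (EuclideanSpace ℝ (Fin 3) × EuclideanSpace ℝ (Fin 3))).restrict (Sp ×ˢ Sm) := by
    rw [Measure.volume_eq_prod, Measure.prod_restrict]
  have hbig_int : Integrable
      (fun p : EuclideanSpace ℝ (Fin 3) × EuclideanSpace ℝ (Fin 3) =>
        ⟪p.1, n⟫ * (1 + |⟪p.1, i⟫|) * KS p.1 p.2 * f₀ p.2)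
      ((volume.restrict Sp).prod (volume.restrict Sm)) := by
    rw [hprod]; exact hKf_int
  have hF_meas : Measurable F :=
    (((mN.comp measurable_fst).mul
      ((mI.comp measurable_fst).sub measurable_const)).mul hK_meas).mul
      (hf₀_meas.comp measurable_snd)
  have hF_int : Integrable F ((volume.restrict Sp).prod (volume.restrict Sm)) := by
    refine Integrable.mono' (hbig_int.const_mul M) hF_meas.aestronglyMeasurable ?_
    rw [hprod]
    filter_upwards [ae_restrict_mem (hSpm.prod hSmm)] with p hp
    have hvn : 0 ≤ ⟪p.1, n⟫ := hp.1
    have h1 : ‖F p‖ = ⟪p.1, n⟫ * |⟪p.1, i⟫ - V| * (KS p.1 p.2 * f₀ p.2) := by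
      simp only [hF_def]
      rw [Real.norm_eq_abs, abs_mul, abs_mul, abs_mul, abs_of_nonneg hvn,
        abs_of_nonneg (hK_nonneg _ _), abs_of_nonneg (hf₀_nonneg _)]
      ring
    rw [h1]
    refine le_of_le_of_eq (bound_aux hvn
      (mul_nonneg (hK_nonneg p.1 p.2) (hf₀_nonneg p.2)) hM1 hMV) ?_
    ring
  -- pointwise rewriting of the diffusive integrand
  have ept : ∀ v, ⟪v, n⟫ * (⟪v, i⟫ - V) * ∫ u in Sm, KS v u * f₀ u
      = ∫ u in Sm, F (v, u) := by
    intro v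
    rw [← integral_const_mul]
    congr 1
    funext u
    simp only [hF_def]
    ring
  -- inner integral computation, a.e. in u
  have hinner : ∀ᵐ u ∂(volume.restrict Sm),
      (fun u => ∫ v in Sp, F (v, u)) u = (fun u => V * (⟪u, n⟫ * f₀ u)) u := by
    filter_upwards [hbig_int.prod_left_ae, ae_restrict_mem hSmm] with u hu_int hu_mem
    have hu : ⟪u, n⟫ ≤ 0 := hu_mem
    by_cases hf0 : f₀ u = 0
    · simp only [hF_def, hf0, mul_zero, integral_zero]
    · have hKu_int : Integrable
          (fun v => ⟪v, n⟫ * (1 + |⟪v, i⟫|) * KS v u) (volume.restrict Sp) := by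
        have h := hu_int.mul_const (f₀ u)⁻¹
        refine h.congr ?_
        filter_upwards with v
        show ⟪v, n⟫ * (1 + |⟪v, i⟫|) * KS v u * f₀ u * (f₀ u)⁻¹
            = ⟪v, n⟫ * (1 + |⟪v, i⟫|) * KS v u
        field_simp
      have hKv_meas : Measurable fun v => KS v u :=
        hK_meas.comp measurable_prodMk_right
      have hh_meas : Measurable fun v => ⟪v, n⟫ * (⟪v, i⟫ - V) * KS v u :=
        (mN.mul (mI.sub measurable_const)).mul hKv_meas
      have hh_int : Integrable
          (fun v => ⟪v, n⟫ * (⟪v, i⟫ - V) * KS v u) (volume.restrict Sp) := by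
        refine Integrable.mono' (hKu_int.const_mul M) hh_meas.aestronglyMeasurable ?_
        filter_upwards [ae_restrict_mem hSpm] with v hv
        have hvn : 0 ≤ ⟪v, n⟫ := hv
        have h1 : ‖⟪v, n⟫ * (⟪v, i⟫ - V) * KS v u‖
            = ⟪v, n⟫ * |⟪v, i⟫ - V| * KS v u := by
          rw [Real.norm_eq_abs, abs_mul, abs_mul, abs_of_nonneg hvn,
            abs_of_nonneg (hK_nonneg _ _)]
        rw [h1]
        exact bound_aux hvn (hK_nonneg v u) hM1 hMV
      have hhSi_int : IntegrableOn
          (fun v => (fun w => ⟪w, n⟫ * (⟪w, i⟫ - V) * KS w u) (Si v)) Sp :=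
        reflect_integrableOn Si hSipre_p hSpm (fun w => ⟪w, n⟫ * (⟪w, i⟫ - V) * KS w u) hh_int
      have e1 : ∫ v in Sp, (fun w => ⟪w, n⟫ * (⟪w, i⟫ - V) * KS w u) (Si v)
          = ∫ v in Sp, (fun w => ⟪w, n⟫ * (⟪w, i⟫ - V) * KS w u) v :=
        reflect_setIntegral Si Sp hSipre_p (fun w => ⟪w, n⟫ * (⟪w, i⟫ - V) * KS w u)
      have e2 : ∀ v, ⟪v, n⟫ * (⟪v, i⟫ - V) * KS v u
            + (fun w => ⟪w, n⟫ * (⟪w, i⟫ - V) * KS w u) (Si v)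
          = -(2 * V) * (⟪v, n⟫ * KS v u) := by
        intro v
        have hK : KS (Si v) u = KS v u := by
          rw [hSi_def, reflIso_apply]; exact hK_even v u
        simp only [hSin v, hSii v, hK]
        ring
      have e3 : (∫ v in Sp, ⟪v, n⟫ * (⟪v, i⟫ - V) * KS v u)
            + ∫ v in Sp, (fun w => ⟪w, n⟫ * (⟪w, i⟫ - V) * KS w u) (Si v)
          = -(2 * V) * |⟪u, n⟫| := by
        rw [← integral_add hh_int hhSi_int, ← hK_mass u hu, ← integral_const_mul]
        exact setIntegral_congr_fun hSpm fun v _ => e2 v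
      have hC : ∫ v in Sp, ⟪v, n⟫ * (⟪v, i⟫ - V) * KS v u = -V * |⟪u, n⟫| := by
        linarith [e1, e3]
      have h4 : ∫ v in Sp, F (v, u)
          = (∫ v in Sp, ⟪v, n⟫ * (⟪v, i⟫ - V) * KS v u) * f₀ u := by
        simp only [hF_def]
        exact integral_mul_const _ _
      rw [h4, hC, abs_of_nonpos hu]
      ring
  have hswap : ∫ v in Sp, ∫ u in Sm, F (v, u) = ∫ u in Sm, ∫ v in Sp, F (v, u) :=
    integral_integral_swap hF_int
  have hD : ∫ v in Sp, (⟪v, n⟫ * (⟪v, i⟫ - V) * ∫ u in Sm, KS v u * f₀ u)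
      = V * c := by
    simp_rw [ept]
    rw [hswap, integral_congr_ae hinner, integral_const_mul, hc_def]
  have hD_int : IntegrableOn
      (fun v => ⟪v, n⟫ * (⟪v, i⟫ - V) * ∫ u in Sm, KS v u * f₀ u) Sp := by
    refine hF_int.integral_prod_left.congr ?_
    filter_upwards with v
    exact (ept v).symm
  -- Final assembly
  have hfinal : ∫ v in Sp, ⟪v, n⟫ * (⟪v, i⟫ - V) * fp v
      = αS * (V * c) + (1 - αS) * (V * c) := by
    have e : ∀ v ∈ Sp, ⟪v, n⟫ * (⟪v, i⟫ - V) * fp v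
        = αS * (⟪v, n⟫ * (⟪v, i⟫ - V) * f₀ (Rn v))
          + (1 - αS) * (⟪v, n⟫ * (⟪v, i⟫ - V) * ∫ u in Sm, KS v u * f₀ u) := by
      intro v hv
      rw [fp_def v hv]
      have hRnv : f₀ (v - (2 * ⟪v, n⟫) • n) = f₀ (Rn v) := by
        rw [hRn_def, reflIso_apply]
      rw [hRnv]
      ring
    rw [setIntegral_congr_fun hSpm e,
      integral_add (hB_int.const_mul αS) (hD_int.const_mul (1 - αS)),
      integral_const_mul, integral_const_mul, hB, hD]
  rw [hA, hfinal]
  ring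
end

section
/- Alternative lateral boundary condition: under the stated hypotheses, for every V ∈ ℝ, ∫_{{v : v·n ≤ 0}} (v·n)·(v₁ − V)·f₀(v) dv + ∫_{{v : v·n ≥ 0}} (v·n)·(v₁ − V)·f₊(v) dv = −V·∫_{{v : v·n ≤ 0}} (v·n)·f₀(v) dv. In particular the lateral force contribution depends only on V, is nonnegative for V ≥ 0, and is a nondecreasing function of V on [0,∞). -/
open MeasureTheory Set
open scoped RealInnerProductSpace

section Aux

variable {E : Type*} [NormedAddCommGroup E] [InnerProductSpace ℝ E]
  [FiniteDimensional ℝ E] [MeasurableSpace E] [BorelSpace E]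

/-- Reflection in the hyperplane orthogonal to `i`, shifted by `V`. -/
noncomputable def reflMap (i : E) (V : ℝ) : E → E :=
  fun v => v - (2 * (⟪v, i⟫ - V)) • i

omit [FiniteDimensional ℝ E] [MeasurableSpace E] [BorelSpace E] in
lemma negRefl_apply (i : E) (hi : ‖i‖ = 1) (w : E) :
    ((Submodule.reflection (ℝ ∙ i)).trans (LinearIsometryEquiv.neg ℝ)) w
      = w - (2 * ⟪w, i⟫) • i := by
  rw [LinearIsometryEquiv.trans_apply, LinearIsometryEquiv.coe_neg,
    Submodule.reflection_apply, Submodule.starProjection_singleton, hi, real_inner_comm w i]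
  norm_num
  rw [two_smul]
  module

omit [FiniteDimensional ℝ E] [MeasurableSpace E] [BorelSpace E] in
lemma reflMap_eq (i : E) (hi : ‖i‖ = 1) (V : ℝ) :
    reflMap i V = (fun v => v + V • i) ∘
      (((Submodule.reflection (ℝ ∙ i)).trans (LinearIsometryEquiv.neg ℝ)) : E → E) ∘
      (fun v => v - V • i) := by
  have hii : ⟪i, i⟫ = (1:ℝ) := by
    rw [real_inner_self_eq_norm_sq, hi]; norm_num
  funext v
  simp only [Function.comp_apply, negRefl_apply i hi, inner_sub_left, real_inner_smul_left, hii,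
    reflMap]
  module

lemma reflMap_measurePreserving (i : E) (hi : ‖i‖ = 1) (V : ℝ) :
    MeasurePreserving (reflMap i V) (volume : Measure E) volume := by
  rw [reflMap_eq i hi V]
  have h1 : MeasurePreserving (fun v : E => v - V • i) volume volume := by
    simpa [sub_eq_add_neg] using measurePreserving_add_right (volume : Measure E) (-(V • i))
  have h2 := ((Submodule.reflection (ℝ ∙ i)).trans (LinearIsometryEquiv.neg ℝ)).measurePreserving
  have h3 : MeasurePreserving (fun v : E => v + V • i) volume volume :=
    measurePreserving_add_right (volume : Measure E) (V • i)
  exact (h3.comp h2).comp h1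

lemma reflMap_measurableEmbedding (i : E) (hi : ‖i‖ = 1) (V : ℝ) :
    MeasurableEmbedding (reflMap i V) := by
  rw [reflMap_eq i hi V]
  have h1 : MeasurableEmbedding (fun v : E => v - V • i) := by
    simpa [sub_eq_add_neg] using (MeasurableEquiv.addRight (-(V • i))).measurableEmbedding
  have h2 := ((Submodule.reflection (ℝ ∙ i)).trans
    (LinearIsometryEquiv.neg ℝ)).toHomeomorph.measurableEmbedding
  have h3 : MeasurableEmbedding (fun v : E => v + V • i) :=
    (MeasurableEquiv.addRight (V • i)).measurableEmbedding
  exact (h3.comp h2).comp h1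

lemma reflMap_setIntegral (i : E) (hi : ‖i‖ = 1) (V : ℝ) (S : Set E)
    (hS : ∀ v : E, reflMap i V v ∈ S ↔ v ∈ S) (g : E → ℝ) :
    ∫ v in S, g (reflMap i V v) = ∫ v in S, g v := by
  have h := (reflMap_measurePreserving i hi V).setIntegral_preimage_emb
    (reflMap_measurableEmbedding i hi V) g S
  rwa [show reflMap i V ⁻¹' S = S from Set.ext fun v => hS v] at h

end Aux

/-- Alternative lateral boundary condition: the lateral force contribution equals
`−V·∫_{v·n ≤ 0} (v·n) f₀(v) dv`; in particular it depends only on `V`, is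
nonnegative for `V ≥ 0`, and is nondecreasing in `V` on `[0,∞)`. -/
theorem lateral_force_alternative
    (i T n : EuclideanSpace ℝ (Fin 3))
    (hi : i = EuclideanSpace.single 0 1)
    (hON : Orthonormal ℝ ![i, T, n])
    (KS : EuclideanSpace ℝ (Fin 3) → EuclideanSpace ℝ (Fin 3) → ℝ)
    (hK_meas : Measurable
      (fun p : EuclideanSpace ℝ (Fin 3) × EuclideanSpace ℝ (Fin 3) => KS p.1 p.2))
    (hK_nonneg : ∀ v u, 0 ≤ KS v u)
    (hK_even : ∀ v u : EuclideanSpace ℝ (Fin 3), KS (v - (2 * ⟪v, i⟫) • i) u = KS v u)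
    (f₀ : EuclideanSpace ℝ (Fin 3) → ℝ)
    (hf₀_meas : Measurable f₀) (hf₀_nonneg : ∀ v, 0 ≤ f₀ v)
    (hf₀_even : ∀ v : EuclideanSpace ℝ (Fin 3), f₀ (v - (2 * ⟪v, i⟫) • i) = f₀ v)
    (hf₀_int : Integrable
      (fun v : EuclideanSpace ℝ (Fin 3) => |⟪v, n⟫| * (1 + |⟪v, i⟫|) * f₀ v))
    (hKf_int : ∀ V : ℝ, IntegrableOn
      (fun p : EuclideanSpace ℝ (Fin 3) × EuclideanSpace ℝ (Fin 3) =>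
        ⟪p.1, n⟫ * (1 + |⟪p.1, i⟫|) * KS (p.1 - V • i) (p.2 - V • i) * f₀ p.2)
      ({v : EuclideanSpace ℝ (Fin 3) | 0 ≤ ⟪v, n⟫} ×ˢ
        {u : EuclideanSpace ℝ (Fin 3) | ⟪u, n⟫ ≤ 0}))
    (fp : ℝ → EuclideanSpace ℝ (Fin 3) → ℝ)
    (fp_def : ∀ (V : ℝ) (v : EuclideanSpace ℝ (Fin 3)), 0 ≤ ⟪v, n⟫ →
      fp V v = ∫ u in {u : EuclideanSpace ℝ (Fin 3) | ⟪u, n⟫ ≤ 0},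
        KS (v - V • i) (u - V • i) * f₀ u)
    (F : ℝ → ℝ)
    (hF : ∀ V : ℝ, F V =
      (∫ v in {v : EuclideanSpace ℝ (Fin 3) | ⟪v, n⟫ ≤ 0}, ⟪v, n⟫ * (⟪v, i⟫ - V) * f₀ v)
        + ∫ v in {v : EuclideanSpace ℝ (Fin 3) | 0 ≤ ⟪v, n⟫}, ⟪v, n⟫ * (⟪v, i⟫ - V) * fp V v) :
    (∀ V : ℝ, F V =
        -V * ∫ v in {v : EuclideanSpace ℝ (Fin 3) | ⟪v, n⟫ ≤ 0}, ⟪v, n⟫ * f₀ v) ∧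
    (∀ V ≥ (0:ℝ), 0 ≤ F V) ∧
    MonotoneOn F (Ici 0) := by
  let E := EuclideanSpace ℝ (Fin 3)
  set Sm : Set (EuclideanSpace ℝ (Fin 3)) := {v | ⟪v, n⟫ ≤ 0} with hSm_def
  set Sp : Set (EuclideanSpace ℝ (Fin 3)) := {v | 0 ≤ ⟪v, n⟫} with hSp_def
  have hi1 : ‖i‖ = 1 := by rw [hi]; simp [EuclideanSpace.norm_single]
  have hii : ⟪i, i⟫ = (1:ℝ) := by rw [real_inner_self_eq_norm_sq, hi1]; norm_num
  have hin : ⟪i, n⟫ = (0:ℝ) := by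
    have h := hON.2 (show (0 : Fin 3) ≠ 2 by decide)
    simpa only [Matrix.cons_val_zero, Matrix.cons_val_two, Matrix.tail_cons, Matrix.head_cons]
      using h
  -- basic inner product computations with `reflMap`
  have hrn : ∀ (V : ℝ) (v : E), ⟪reflMap i V v, n⟫ = ⟪v, n⟫ := by
    intro V v
    simp only [reflMap, inner_sub_left, real_inner_smul_left, hin, mul_zero, sub_zero]
  have hri : ∀ (V : ℝ) (v : E), ⟪reflMap i V v, i⟫ = 2 * V - ⟪v, i⟫ := by
    intro V v
    simp only [reflMap, inner_sub_left, real_inner_smul_left, hii, mul_one]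
    ring
  have hr0 : ∀ v : E, reflMap i 0 v = v - (2 * ⟪v, i⟫) • i := by
    intro v; simp only [reflMap, sub_zero]
  -- measurability
  have hcn : Continuous fun v : E => ⟪v, n⟫ := continuous_id.inner continuous_const
  have hci : Continuous fun v : E => ⟪v, i⟫ := continuous_id.inner continuous_const
  have hSmM : MeasurableSet Sm := measurableSet_le hcn.measurable measurable_const
  have hSpM : MeasurableSet Sp := measurableSet_le measurable_const hcn.measurable
  -- integrability of the two pieces on the left half
  have hbound : ∀ v : E, |⟪v, n⟫| * f₀ v ≤ |⟪v, n⟫| * (1 + |⟪v, i⟫|) * f₀ v := by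
    intro v
    have h1 := abs_nonneg (⟪v, n⟫ : ℝ)
    have h2 := abs_nonneg (⟪v, i⟫ : ℝ)
    have h3 := hf₀_nonneg v
    nlinarith [mul_nonneg (mul_nonneg h1 h2) h3]
  have hInth : Integrable (fun v : E => ⟪v, n⟫ * ⟪v, i⟫ * f₀ v) := by
    refine hf₀_int.mono' ?_ (Filter.Eventually.of_forall fun v => ?_)
    · exact ((hcn.measurable.mul hci.measurable).mul hf₀_meas).aestronglyMeasurable
    · rw [Real.norm_eq_abs, abs_mul, abs_mul, abs_of_nonneg (hf₀_nonneg v)]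
      have h1 := abs_nonneg (⟪v, n⟫ : ℝ)
      have h2 := abs_nonneg (⟪v, i⟫ : ℝ)
      have h3 := hf₀_nonneg v
      nlinarith [mul_nonneg (mul_nonneg h1 h2) h3]
  have hIntk : Integrable (fun v : E => ⟪v, n⟫ * f₀ v) := by
    refine hf₀_int.mono' ?_ (Filter.Eventually.of_forall fun v => ?_)
    · exact (hcn.measurable.mul hf₀_meas).aestronglyMeasurable
    · rw [Real.norm_eq_abs, abs_mul, abs_of_nonneg (hf₀_nonneg v)]
      exact hbound v
  -- the odd part over the left half vanishes
  have hodd : ∫ v in Sm, ⟪v, n⟫ * ⟪v, i⟫ * f₀ v = 0 := by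
    have hmem : ∀ v : E, reflMap i 0 v ∈ Sm ↔ v ∈ Sm := by
      intro v; simp only [hSm_def, mem_setOf_eq, hrn 0 v]; exact Iff.rfl
    have hsub := reflMap_setIntegral i hi1 0 Sm hmem
      (fun v => ⟪v, n⟫ * ⟪v, i⟫ * f₀ v)
    have hptw : (fun v : E => ⟪reflMap i 0 v, n⟫ * ⟪reflMap i 0 v, i⟫ * f₀ (reflMap i 0 v))
        = fun v : E => -(⟪v, n⟫ * ⟪v, i⟫ * f₀ v) := by
      funext v
      rw [hrn 0 v, hri 0 v, hr0 v, hf₀_even v]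
      ring
    rw [hptw] at hsub
    rw [integral_neg] at hsub
    linarith
  set C : ℝ := ∫ v in Sm, ⟪v, n⟫ * f₀ v with hC_def
  -- Step A : first integral
  have stepA : ∀ V : ℝ,
      (∫ v in Sm, ⟪v, n⟫ * (⟪v, i⟫ - V) * f₀ v) = -V * C := by
    intro V
    have heq : (fun v : E => ⟪v, n⟫ * (⟪v, i⟫ - V) * f₀ v)
        = fun v : E => ⟪v, n⟫ * ⟪v, i⟫ * f₀ v + (-V) * (⟪v, n⟫ * f₀ v) := by
      funext v; ring
    rw [heq, integral_add hInth.integrableOn ((hIntk.integrableOn).const_mul (-V)),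
      integral_const_mul, hodd]
    ring
  -- Step B : second integral vanishes
  have stepB : ∀ V : ℝ,
      (∫ v in Sp, ⟪v, n⟫ * (⟪v, i⟫ - V) * fp V v) = 0 := by
    intro V
    have hmem : ∀ v : E, reflMap i V v ∈ Sp ↔ v ∈ Sp := by
      intro v; simp only [hSp_def, mem_setOf_eq, hrn V v]; exact Iff.rfl
    have hshift : ∀ v : E,
        (v - V • i) - (2 * ⟪v - V • i, i⟫) • i = reflMap i V v - V • i := by
      intro v
      simp only [reflMap, inner_sub_left, real_inner_smul_left, hii, mul_one]
      module
    have hfp : ∀ v : E, v ∈ Sp → fp V (reflMap i V v) = fp V v := by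
      intro v hv
      have hv' : 0 ≤ ⟪reflMap i V v, n⟫ := by rw [hrn V v]; exact hv
      rw [fp_def V _ hv', fp_def V v hv]
      have hKS : ∀ u : E, KS (reflMap i V v - V • i) u = KS (v - V • i) u := by
        intro u
        rw [← hshift v]
        exact hK_even (v - V • i) u
      simp only [hKS]
    have hsub := reflMap_setIntegral i hi1 V Sp hmem
      (fun v => ⟪v, n⟫ * (⟪v, i⟫ - V) * fp V v)
    have hcongr : ∫ v in Sp,
        ⟪reflMap i V v, n⟫ * (⟪reflMap i V v, i⟫ - V) * fp V (reflMap i V v)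
        = ∫ v in Sp, -(⟪v, n⟫ * (⟪v, i⟫ - V) * fp V v) := by
      refine setIntegral_congr_fun hSpM fun v hv => ?_
      rw [hrn V v, hri V v, hfp v hv]
      ring
    rw [hcongr, integral_neg] at hsub
    linarith
  have part1 : ∀ V : ℝ, F V = -V * C := by
    intro V
    rw [hF V]
    rw [stepA V, stepB V]
    ring
  have hC : C ≤ 0 := by
    refine setIntegral_nonpos_ae hSmM (Filter.Eventually.of_forall fun v hv => ?_)
    exact mul_nonpos_iff.mpr (Or.inr ⟨hv, hf₀_nonneg v⟩)
  refine ⟨part1, fun V hV => ?_, fun a ha b hb hab => ?_⟩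
  · rw [part1 V]; nlinarith
  · rw [part1 a, part1 b]
    simp only [mem_Ici] at ha hb
    nlinarith
end

section
/- The fictitious force F₀(V) := F_S(V) + C·(∫_{−∞}^{V} ℓ(v − V)·a₀(v) dv − ∫_{V}^{∞} ℓ(v − V)·a₀(v) dv) is a C¹ function on (0,∞) satisfying F₀(V) > 0 and F₀′(V) > 0 for every V > 0; that is, the force on the body computed by ignoring recollisions is positive and strictly increasing in the body's velocity. -/
open Set MeasureTheory

/-- The fictitious force `F₀(V) = F_S(V) + C(∫_{v ≤ V} ℓ(v−V)a₀(v)dv − ∫_{v ≥ V} ℓ(v−V)a₀(v)dv)`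
is `C¹` on `(0,∞)` with `F₀(V) > 0` and `F₀′(V) > 0` for every `V > 0`. -/
theorem fictitious_force_positive_increasing
    (ℓ a₀ FS : ℝ → ℝ) (C : ℝ) (hC : 0 < C)
    (hℓ_C1 : ContDiff ℝ 1 ℓ) (hℓ_even : ∀ w, ℓ (-w) = ℓ w) (hℓ0 : ℓ 0 = 0)
    (hℓ_nonneg : ∀ w, 0 ≤ ℓ w)
    (hℓ_deriv : ∀ w < (0:ℝ), deriv ℓ w < 0)
    (ha₀_cont : Continuous a₀) (ha₀_even : ∀ v, a₀ (-v) = a₀ v)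
    (ha₀_nonneg : ∀ v, 0 ≤ a₀ v) (ha₀_ne : ∃ v, a₀ v ≠ 0)
    (hdom : ∀ R > (0:ℝ), Integrable (fun v : ℝ =>
      (⨆ W : Icc (-R) R, (ℓ (v - (W : ℝ)) + |deriv ℓ (v - (W : ℝ))|)) * a₀ v))
    (hFS : ContDiff ℝ 1 FS) (hFS_nonneg : ∀ V, 0 ≤ FS V)
    (hFS_mono : ∀ V, 0 ≤ deriv FS V)
    (F₀ : ℝ → ℝ)
    (hF₀ : ∀ V : ℝ, F₀ V = FS V + C * ((∫ v in Iic V, ℓ (v - V) * a₀ v)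
        - ∫ v in Ici V, ℓ (v - V) * a₀ v)) :
    ∃ F₀' : ℝ → ℝ, ContinuousOn F₀' (Ioi 0) ∧
      (∀ V ∈ Ioi (0:ℝ), HasDerivAt F₀ (F₀' V) V) ∧
      ∀ V ∈ Ioi (0:ℝ), 0 < F₀ V ∧ 0 < F₀' V := by
  classical
  have hℓdiff : Differentiable ℝ ℓ := hℓ_C1.differentiable one_ne_zero
  have hℓ'cont : Continuous (deriv ℓ) := hℓ_C1.continuous_deriv le_rfl
  have hℓ'0 : deriv ℓ 0 = 0 := by
    have hmin : IsLocalMin ℓ 0 :=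
      Filter.Eventually.of_forall (fun x => by rw [hℓ0]; exact hℓ_nonneg x)
    exact hmin.deriv_eq_zero
  have hℓ'odd : ∀ w, deriv ℓ (-w) = -deriv ℓ w := by
    intro w
    have h1 : HasDerivAt (fun x : ℝ => ℓ (-x)) (deriv ℓ (-w) * (-1)) w :=
      HasDerivAt.comp w ((hℓdiff (-w)).hasDerivAt) (hasDerivAt_neg w)
    have h2 : (fun x : ℝ => ℓ (-x)) = ℓ := funext hℓ_even
    rw [h2] at h1
    have h3 := h1.deriv
    linarith
  have hℓ'pos : ∀ w > (0:ℝ), 0 < deriv ℓ w := by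
    intro w hw
    have h := hℓ_deriv (-w) (by linarith)
    rw [hℓ'odd w] at h
    linarith
  have hℓ'ne : ∀ w : ℝ, w ≠ 0 → deriv ℓ w ≠ 0 := by
    intro w hw
    rcases lt_or_gt_of_ne hw with h | h
    · exact ne_of_lt (hℓ_deriv w h)
    · exact ne_of_gt (hℓ'pos w h)
  -- the odd extension ψ and its derivative
  set ψ : ℝ → ℝ := fun w => if w ≤ 0 then ℓ w else -ℓ w with hψdef
  set ψ' : ℝ → ℝ := fun w => -|deriv ℓ w| with hψ'def
  have habsψ : ∀ w, |ψ w| = ℓ w := by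
    intro w
    by_cases h : w ≤ 0 <;> simp [ψ, h, abs_of_nonneg (hℓ_nonneg w)]
  have hψ0 : ψ 0 = 0 := by simp [ψ, hℓ0]
  have hψ_odd : ∀ w, ψ (-w) = -ψ w := by
    intro w
    rcases lt_trichotomy w 0 with h | h | h
    · have h1 : ¬(-w ≤ 0) := by simp; linarith
      simp [ψ, h.le, h1, hℓ_even]
    · simp [ψ, h, hℓ0]
    · have h1 : ¬(w ≤ 0) := not_le.mpr h
      simp [ψ, h1, (by linarith : -w ≤ (0:ℝ)), hℓ_even]
  have hψ_deriv : ∀ w, HasDerivAt ψ (ψ' w) w := by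
    intro w
    rcases lt_trichotomy w 0 with h | h | h
    · have heq : ψ' w = deriv ℓ w := by
        simp [ψ', abs_of_neg (hℓ_deriv w h)]
      rw [heq]
      refine ((hℓdiff w).hasDerivAt).congr_of_eventuallyEq ?_
      filter_upwards [isOpen_Iio.eventually_mem (show w ∈ Iio (0:ℝ) from h)] with x hx
      simp [ψ, le_of_lt (show x < 0 from hx)]
    · subst h
      have hψ'0 : ψ' 0 = 0 := by simp [ψ', hℓ'0]
      rw [hψ'0]
      have hL : HasDerivAt ℓ 0 0 := by
        have := (hℓdiff 0).hasDerivAt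
        rwa [hℓ'0] at this
      rw [hasDerivAt_iff_isLittleO] at hL ⊢
      have h1 : (fun x => ψ x) =o[nhds (0:ℝ)] fun x => x - 0 := by
        have h2 : (fun x => ℓ x) =o[nhds (0:ℝ)] fun x => x - 0 := by
          simpa [hℓ0] using hL
        rw [← Asymptotics.isLittleO_norm_left] at h2 ⊢
        have h3 : (fun x => ‖ψ x‖) = fun x => ‖ℓ x‖ := by
          funext x
          rw [Real.norm_eq_abs, Real.norm_eq_abs, habsψ x, abs_of_nonneg (hℓ_nonneg x)]
        rw [h3]; exact h2
      simpa [hψ0] using h1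
    · have heq : ψ' w = -(deriv ℓ w) := by
        simp [ψ', abs_of_pos (hℓ'pos w h)]
      rw [heq]
      refine (((hℓdiff w).hasDerivAt).neg).congr_of_eventuallyEq ?_
      filter_upwards [isOpen_Ioi.eventually_mem (show w ∈ Ioi (0:ℝ) from h)] with x hx
      simp [ψ, not_le.mpr (show (0:ℝ) < x from hx)]
  have hψ_cont : Continuous ψ :=
    continuous_iff_continuousAt.mpr fun w => (hψ_deriv w).differentiableAt.continuousAt
  -- the supremum bound
  have hsup : ∀ R : ℝ, ∀ V ∈ Icc (-R) R, ∀ v : ℝ,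
      ℓ (v - V) + |deriv ℓ (v - V)| ≤
        ⨆ W : Icc (-R) R, (ℓ (v - (W : ℝ)) + |deriv ℓ (v - (W : ℝ))|) := by
    intro R V hV v
    have hc : Continuous fun W : Icc (-R) R => ℓ (v - (W : ℝ)) + |deriv ℓ (v - (W : ℝ))| := by
      have hs : Continuous fun W : Icc (-R) R => v - (W : ℝ) :=
        continuous_const.sub continuous_subtype_val
      exact (hℓ_C1.continuous.comp hs).add ((hℓ'cont.comp hs).abs)
    have hbdd : BddAbove (Set.range fun W : Icc (-R) R =>
        ℓ (v - (W : ℝ)) + |deriv ℓ (v - (W : ℝ))|) :=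
      (isCompact_range hc).bddAbove
    exact le_ciSup hbdd ⟨V, hV⟩
  -- integrability
  have hmemIcc : ∀ V : ℝ, V ∈ Icc (-(|V| + 1)) (|V| + 1) := by
    intro V
    constructor <;> [linarith [neg_abs_le V]; linarith [le_abs_self V]]
  have hint_ψ : ∀ V : ℝ, Integrable (fun v => ψ (v - V) * a₀ v) := by
    intro V
    refine (hdom (|V| + 1) (by positivity)).mono' ?_ ?_
    · exact ((hψ_cont.comp (continuous_id.sub continuous_const)).mul
        ha₀_cont).aestronglyMeasurable
    · filter_upwards with v
      rw [Real.norm_eq_abs, abs_mul, habsψ, abs_of_nonneg (ha₀_nonneg v)]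
      refine mul_le_mul_of_nonneg_right ?_ (ha₀_nonneg v)
      exact le_trans (le_add_of_nonneg_right (abs_nonneg _))
        (hsup (|V| + 1) V (hmemIcc V) v)
  have hint_ψ' : ∀ V : ℝ, Integrable (fun v => |deriv ℓ (v - V)| * a₀ v) := by
    intro V
    refine (hdom (|V| + 1) (by positivity)).mono' ?_ ?_
    · exact ((hℓ'cont.comp (continuous_id.sub continuous_const)).abs.mul
        ha₀_cont).aestronglyMeasurable
    · filter_upwards with v
      rw [Real.norm_eq_abs, abs_mul, abs_abs, abs_of_nonneg (ha₀_nonneg v)]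
      refine mul_le_mul_of_nonneg_right ?_ (ha₀_nonneg v)
      exact le_trans (le_add_of_nonneg_left (hℓ_nonneg _))
        (hsup (|V| + 1) V (hmemIcc V) v)
  -- G and its derivative g
  set G : ℝ → ℝ := fun V => ∫ v, ψ (v - V) * a₀ v with hGdef
  set g : ℝ → ℝ := fun V => ∫ v, |deriv ℓ (v - V)| * a₀ v with hgdef
  have hball_Icc : ∀ V₀ : ℝ, ∀ x ∈ Metric.ball V₀ 1, x ∈ Icc (-(|V₀| + 1)) (|V₀| + 1) := by
    intro V₀ x hx
    rw [Metric.mem_ball, Real.dist_eq] at hx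
    rcases abs_lt.mp hx with ⟨h1, h2⟩
    constructor <;> [linarith [neg_abs_le V₀]; linarith [le_abs_self V₀]]
  have hG_deriv : ∀ V₀ : ℝ, HasDerivAt G (g V₀) V₀ := by
    intro V₀
    set R : ℝ := |V₀| + 1 with hRdef
    have key := hasDerivAt_integral_of_dominated_loc_of_deriv_le
      (μ := (volume : Measure ℝ)) (x₀ := V₀)
      (F := fun x v => ψ (v - x) * a₀ v) (F' := fun x v => |deriv ℓ (v - x)| * a₀ v)
      (bound := fun v => (⨆ W : Icc (-R) R,
        (ℓ (v - (W : ℝ)) + |deriv ℓ (v - (W : ℝ))|)) * a₀ v)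
      (Metric.ball_mem_nhds V₀ one_pos)
      (Filter.Eventually.of_forall fun x =>
        ((hψ_cont.comp (continuous_id.sub continuous_const)).mul
          ha₀_cont).aestronglyMeasurable)
      (hint_ψ V₀)
      (((hℓ'cont.comp (continuous_id.sub continuous_const)).abs.mul
        ha₀_cont).aestronglyMeasurable)
      (Filter.Eventually.of_forall fun v x hx => by
        rw [Real.norm_eq_abs, abs_mul, abs_abs, abs_of_nonneg (ha₀_nonneg v)]
        refine mul_le_mul_of_nonneg_right ?_ (ha₀_nonneg v)
        exact le_trans (le_add_of_nonneg_left (hℓ_nonneg _))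
          (hsup R x (hball_Icc V₀ x hx) v))
      (hdom R (by positivity))
      (Filter.Eventually.of_forall fun v x _ => by
        have h3 : HasDerivAt (fun y : ℝ => ψ (v - y)) (ψ' (v - x) * (-1)) x :=
          HasDerivAt.comp x (hψ_deriv (v - x)) ((hasDerivAt_id x).const_sub v)
        have h4 : ψ' (v - x) * (-1) = |deriv ℓ (v - x)| := by simp [ψ']
        rw [h4] at h3
        exact h3.mul_const (a₀ v))
    exact key.2
  -- positivity of g
  obtain ⟨v₀, hv₀⟩ := ha₀_ne
  have hv₀pos : 0 < a₀ v₀ := (ha₀_nonneg v₀).lt_of_ne (Ne.symm hv₀)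
  have hg_pos : ∀ V : ℝ, 0 < g V := by
    intro V
    have h_nonneg : 0 ≤ fun v => |deriv ℓ (v - V)| * a₀ v :=
      fun v => mul_nonneg (abs_nonneg _) (ha₀_nonneg v)
    rw [hgdef]
    rw [integral_pos_iff_support_of_nonneg h_nonneg (hint_ψ' V)]
    have hUopen : IsOpen {u : ℝ | 0 < a₀ u} := isOpen_lt continuous_const ha₀_cont
    have hsub : {u : ℝ | 0 < a₀ u} \ {V} ⊆
        Function.support fun v => |deriv ℓ (v - V)| * a₀ v := by
      rintro u ⟨hu1, hu2⟩
      have hne : u - V ≠ 0 := sub_ne_zero.mpr (by simpa using hu2)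
      exact mul_ne_zero (abs_ne_zero.mpr (hℓ'ne _ hne)) (ne_of_gt hu1)
    calc (0:ENNReal) < volume ({u : ℝ | 0 < a₀ u} \ {V}) := by
          rw [measure_diff_null (measure_singleton V)]
          exact hUopen.measure_pos volume ⟨v₀, hv₀pos⟩
      _ ≤ volume (Function.support fun v => |deriv ℓ (v - V)| * a₀ v) :=
          measure_mono hsub
  -- G is strictly monotone and G 0 = 0
  have hG_mono : StrictMono G := strictMono_of_deriv_pos fun V => by
    rw [(hG_deriv V).deriv]; exact hg_pos V
  have hG0 : G 0 = 0 := by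
    have h1 : (∫ v : ℝ, ψ (-v) * a₀ (-v)) = ∫ v : ℝ, ψ v * a₀ v :=
      integral_neg_eq_self (fun v : ℝ => ψ v * a₀ v) volume
    have h2 : (∫ v : ℝ, ψ (-v) * a₀ (-v)) = -∫ v : ℝ, ψ v * a₀ v := by
      rw [← integral_neg]
      congr 1
      funext v
      rw [hψ_odd, ha₀_even]; ring
    have h3 : (∫ v : ℝ, ψ v * a₀ v) = 0 := by linarith [h1.symm.trans h2]
    simpa [hGdef, sub_zero] using h3
  -- rewriting F₀
  have hF₀eq : ∀ V : ℝ, F₀ V = FS V + C * G V := by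
    intro V
    rw [hF₀ V]
    have hsplit : G V = (∫ v in Iic V, ψ (v - V) * a₀ v) + ∫ v in Ioi V, ψ (v - V) * a₀ v := by
      rw [hGdef]
      have := integral_add_compl (measurableSet_Iic (a := V)) (hint_ψ V)
      rw [compl_Iic] at this
      exact this.symm
    have h1 : (∫ v in Iic V, ψ (v - V) * a₀ v) = ∫ v in Iic V, ℓ (v - V) * a₀ v :=
      setIntegral_congr_fun measurableSet_Iic fun v hv => by
        simp [ψ, sub_nonpos.mpr (show v ≤ V from hv)]
    have h2 : (∫ v in Ioi V, ψ (v - V) * a₀ v) = -∫ v in Ici V, ℓ (v - V) * a₀ v := by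
      rw [integral_Ici_eq_integral_Ioi, ← integral_neg]
      refine setIntegral_congr_fun measurableSet_Ioi fun v hv => ?_
      have hvV : ¬(v - V ≤ 0) := by
        simp only [mem_Ioi] at hv
        simp; linarith
      simp [ψ, hvV]
    have : (∫ v in Iic V, ℓ (v - V) * a₀ v) - ∫ v in Ici V, ℓ (v - V) * a₀ v = G V := by
      rw [hsplit, h1, h2]; ring
    rw [← this]
  -- conclusion
  refine ⟨fun V => deriv FS V + C * g V, ?_, ?_, ?_⟩
  · intro V hV
    apply ContinuousAt.continuousWithinAt
    refine ContinuousAt.add ((hFS.continuous_deriv le_rfl).continuousAt) ?_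
    refine continuousAt_const.mul ?_
    set R : ℝ := |V| + 1 with hRdef
    refine continuousAt_of_dominated
      (bound := fun v => (⨆ W : Icc (-R) R,
        (ℓ (v - (W : ℝ)) + |deriv ℓ (v - (W : ℝ))|)) * a₀ v) ?_ ?_ ?_ ?_
    · exact Filter.Eventually.of_forall fun x =>
        ((hℓ'cont.comp (continuous_id.sub continuous_const)).abs.mul
          ha₀_cont).aestronglyMeasurable
    · filter_upwards [Metric.ball_mem_nhds V one_pos] with x hx
      filter_upwards with v
      rw [Real.norm_eq_abs, abs_mul, abs_abs, abs_of_nonneg (ha₀_nonneg v)]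
      refine mul_le_mul_of_nonneg_right ?_ (ha₀_nonneg v)
      exact le_trans (le_add_of_nonneg_left (hℓ_nonneg _))
        (hsup R x (hball_Icc V x hx) v)
    · exact hdom R (by positivity)
    · filter_upwards with v
      exact ((hℓ'cont.comp (continuous_const.sub continuous_id)).abs.mul
        continuous_const).continuousAt
  · intro V _
    have hFs' : HasDerivAt FS (deriv FS V) V := (hFS.differentiable one_ne_zero V).hasDerivAt
    have hsum := hFs'.add ((hG_deriv V).const_mul C)
    exact hsum.congr_of_eventuallyEq (Filter.Eventually.of_forall fun x => hF₀eq x)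
  · intro V hV
    have hGV : 0 < G V := by
      have := hG_mono (show (0:ℝ) < V from hV)
      rw [hG0] at this
      exact this
    constructor
    · rw [hF₀eq V]
      have : 0 < C * G V := mul_pos hC hGV
      linarith [hFS_nonneg V]
    · show 0 < deriv FS V + C * g V
      have : 0 < C * g V := mul_pos hC (hg_pos V)
      linarith [hFS_mono V]
end

section
/- Monotonicity of the body's velocity on the initial interval: let B₀ > 0, B∞ > 0, 0 < γ < 1, p ≥ 0, C > 0, suppose B₀ > γ^p and B₀ > C²·γ^p, and set t₀ = (1/(2B∞))·log(B₀/γ^p) > 0. Let Q, R : [0,∞) → ℝ be continuous with Q(t) ≥ B₀ and 0 ≤ R(t) ≤ C·γ^{p+1} for all t ≥ 0, and let y : [0,∞) → ℝ be differentiable with y′(t) = −Q(t)·y(t) + R(t) and y(t) ≥ γ·e^{−B∞·t} for all t ≥ 0. Then y′(t) < 0 for every t ∈ [0, t₀]. -/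
open Set

/-- Monotonicity of the body's velocity on the initial time interval: if
`y′ = −Q y + R` with `Q ≥ B₀`, `0 ≤ R ≤ Cγ^{p+1}`, `y ≥ γ e^{−B∞ t}`,
`B₀ > γ^p`, `B₀ > C²γ^p`, and `t₀ = (1/(2B∞)) log(B₀/γ^p)`, then `y′ < 0`
on `[0, t₀]`. -/
theorem velocity_increasing_on_initial_interval
    (B₀ Binf γ p C t₀ : ℝ)
    (hB₀ : 0 < B₀) (hBinf : 0 < Binf) (hγ0 : 0 < γ) (hγ1 : γ < 1)
    (hp : 0 ≤ p) (hC : 0 < C)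
    (h1 : γ ^ p < B₀) (h2 : C ^ 2 * γ ^ p < B₀)
    (ht₀ : t₀ = (1 / (2 * Binf)) * Real.log (B₀ / γ ^ p))
    (Q R y y' : ℝ → ℝ) (hQc : Continuous Q) (hRc : Continuous R)
    (hQ : ∀ t ≥ (0:ℝ), B₀ ≤ Q t)
    (hR : ∀ t ≥ (0:ℝ), 0 ≤ R t ∧ R t ≤ C * γ ^ (p + 1))
    (hy : ∀ t ≥ (0:ℝ), HasDerivAt y (y' t) t)
    (hode : ∀ t ≥ (0:ℝ), y' t = -Q t * y t + R t)
    (hlow : ∀ t ≥ (0:ℝ), γ * Real.exp (-Binf * t) ≤ y t) :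
    ∀ t ∈ Icc (0:ℝ) t₀, y' t < 0 := by
  intro t ht
  obtain ⟨ht0, htt0⟩ := ht
  have hgp : (0:ℝ) < γ ^ p := Real.rpow_pos_of_pos hγ0 p
  have hquot : (0:ℝ) < B₀ / γ ^ p := div_pos hB₀ hgp
  have hexp2 : Real.exp (2 * Binf * t₀) = B₀ / γ ^ p := by
    rw [ht₀]
    have : 2 * Binf * (1 / (2 * Binf) * Real.log (B₀ / γ ^ p))
        = Real.log (B₀ / γ ^ p) := by
      field_simp
    rw [this, Real.exp_log hquot]
  have he : (0:ℝ) < Real.exp (-Binf * t) := Real.exp_pos _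
  -- key: C * γ^p < B₀ * exp(-Binf * t)
  have hsq : (C * γ ^ p) ^ 2 < (B₀ * Real.exp (-Binf * t)) ^ 2 := by
    have h3 : Real.exp (-Binf * t₀) ≤ Real.exp (-Binf * t) :=
      Real.exp_le_exp.2 (by nlinarith)
    have h4 : Real.exp (-Binf * t₀) ^ 2 = γ ^ p / B₀ := by
      rw [← Real.exp_nat_mul]
      have : (2:ℝ) * (-Binf * t₀) = -(2 * Binf * t₀) := by ring
      push_cast
      rw [this, Real.exp_neg, hexp2, inv_div]
    have h5 : B₀ ^ 2 * (γ ^ p / B₀) = B₀ * γ ^ p := by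
      field_simp
    have h6 : (C * γ ^ p) ^ 2 < B₀ * γ ^ p := by nlinarith
    have h7 : (B₀ * Real.exp (-Binf * t₀)) ^ 2 = B₀ * γ ^ p := by
      rw [mul_pow, h4, h5]
    have h8 : (B₀ * Real.exp (-Binf * t₀)) ^ 2 ≤ (B₀ * Real.exp (-Binf * t)) ^ 2 :=
      pow_le_pow_left₀ (by positivity) (mul_le_mul_of_nonneg_left h3 hB₀.le) 2
    linarith
  have hkey : C * γ ^ p < B₀ * Real.exp (-Binf * t) :=
    lt_of_pow_lt_pow_left₀ 2 (by positivity) hsq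
  have hyl := hlow t ht0
  have hQl := hQ t ht0
  obtain ⟨hR0, hR1⟩ := hR t ht0
  have hgpp : γ ^ (p + 1) = γ ^ p * γ := by
    rw [Real.rpow_add hγ0, Real.rpow_one]
  rw [hode t ht0]
  have hyp : 0 < y t := lt_of_lt_of_le (by positivity) hyl
  have hQy : B₀ * (γ * Real.exp (-Binf * t)) ≤ Q t * y t := by
    apply mul_le_mul hQl hyl (by positivity) (le_trans hB₀.le hQl)
  nlinarith
end

section
/- Lower decay bound via the differential inequality: let B∞ > 0 and γ > 0, let R : [0,∞) → [0,∞) be continuous, and let y : [0,∞) → ℝ be differentiable with y(0) = γ and y′(t) ≥ −B∞·y(t) + R(t) for all t ≥ 0. Then y(t) ≥ γ·e^{−B∞·t} for all t ≥ 0. If moreover there exist a > 0, m > 0 and t₀ > 0 with e^{−B∞·t₀} ≤ 1/2 and R(s) ≥ a·s^{−m} for all s ≥ t₀, then y(t) ≥ γ·e^{−B∞·t} + (a/(2·B∞))·t^{−m} for all t ≥ 2·t₀. -/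
lemma mono_aux (a b : ℝ) (hab : a ≤ b) (f f' : ℝ → ℝ)
    (hf : ∀ s ∈ Set.Icc a b, HasDerivAt f (f' s) s)
    (hf' : ∀ s ∈ Set.Icc a b, 0 ≤ f' s) : f a ≤ f b := by
  have hmono : MonotoneOn f (Set.Icc a b) := by
    apply monotoneOn_of_hasDerivWithinAt_nonneg (convex_Icc a b)
      (fun s hs => (hf s hs).continuousAt.continuousWithinAt)
    · intro x hx
      rw [interior_Icc] at hx
      exact (hf x (Set.Ioo_subset_Icc_self hx)).hasDerivWithinAt
    · intro x hx
      rw [interior_Icc] at hx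
      exact hf' x (Set.Ioo_subset_Icc_self hx)
  exact hmono (Set.left_mem_Icc.2 hab) (Set.right_mem_Icc.2 hab) hab

/-- Lower decay bound via the differential inequality: `y′ ≥ −B∞ y + R` with `R ≥ 0`
and `y(0) = γ` give `y(t) ≥ γ e^{−B∞ t}`; if moreover `R(s) ≥ a s^{−m}` for `s ≥ t₀`
and `e^{−B∞ t₀} ≤ 1/2`, then `y(t) ≥ γ e^{−B∞ t} + (a/(2B∞)) t^{−m}` for `t ≥ 2t₀`. -/
theorem lower_decay_bound
    (Binf γ : ℝ) (hBinf : 0 < Binf) (hγ : 0 < γ)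
    (R y y' : ℝ → ℝ) (hRc : Continuous R) (hR0 : ∀ t ≥ (0:ℝ), 0 ≤ R t)
    (hy0 : y 0 = γ)
    (hy : ∀ t ≥ (0:ℝ), HasDerivAt y (y' t) t)
    (hode : ∀ t ≥ (0:ℝ), -Binf * y t + R t ≤ y' t) :
    (∀ t ≥ (0:ℝ), γ * Real.exp (-Binf * t) ≤ y t) ∧
    ∀ a > (0:ℝ), ∀ m > (0:ℝ), ∀ t₀ > (0:ℝ),
      Real.exp (-Binf * t₀) ≤ 1 / 2 →
      (∀ s ≥ t₀, a * s ^ (-m) ≤ R s) →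
      ∀ t ≥ 2 * t₀, γ * Real.exp (-Binf * t) + (a / (2 * Binf)) * t ^ (-m) ≤ y t := by
  set z : ℝ → ℝ := fun t => y t * Real.exp (Binf * t) with hz
  set z' : ℝ → ℝ := fun t => y' t * Real.exp (Binf * t) + y t * (Real.exp (Binf * t) * Binf)
    with hz'
  have hzderiv : ∀ t ≥ (0:ℝ), HasDerivAt z (z' t) t := by
    intro t ht
    exact (hy t ht).mul (((hasDerivAt_id t).const_mul Binf).exp.congr_deriv (by simp [mul_comm]))
  have hz'ge : ∀ t ≥ (0:ℝ), R t * Real.exp (Binf * t) ≤ z' t := by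
    intro t ht
    have h1 := hode t ht
    have h2 := Real.exp_pos (Binf * t)
    simp only [hz']
    nlinarith
  have hz0 : z 0 = γ := by simp [hz, hy0]
  -- monotonicity of z on [0,∞)
  have hzmono : ∀ s ≥ (0:ℝ), ∀ t ≥ s, z s ≤ z t := by
    intro s hs t hts
    refine mono_aux s t hts z z' (fun u hu => hzderiv u (le_trans hs hu.1))
      (fun u hu => ?_)
    have hu0 : (0:ℝ) ≤ u := le_trans hs hu.1
    have := hz'ge u hu0
    have := hR0 u hu0
    have := (Real.exp_pos (Binf * u)).le
    nlinarith
  have hpart1 : ∀ t ≥ (0:ℝ), γ * Real.exp (-Binf * t) ≤ y t := by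
    intro t ht
    have h1 : γ ≤ z t := hz0 ▸ hzmono 0 le_rfl t ht
    have hE : Real.exp (Binf * t) * Real.exp (-Binf * t) = 1 := by
      rw [← Real.exp_add]; ring_nf; exact Real.exp_zero
    have hEpos := (Real.exp_pos (-Binf * t)).le
    have h2 : γ * Real.exp (-Binf * t) ≤ z t * Real.exp (-Binf * t) :=
      mul_le_mul_of_nonneg_right h1 hEpos
    calc γ * Real.exp (-Binf * t) ≤ z t * Real.exp (-Binf * t) := h2
      _ = y t * (Real.exp (Binf * t) * Real.exp (-Binf * t)) := by ring
      _ = y t := by rw [hE, mul_one]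
  refine ⟨hpart1, ?_⟩
  intro a ha m hm t₀ ht₀ hhalf hRlb t ht
  have ht0pos : (0:ℝ) < t₀ := ht₀
  have htpos : (0:ℝ) < t := by linarith
  have htt0 : t₀ ≤ t - t₀ := by linarith
  have htt0' : (0:ℝ) ≤ t - t₀ := by linarith
  -- c = a * t^(-m)
  set c : ℝ := a * t ^ (-m) with hc
  have hcpos : 0 < c := mul_pos ha (Real.rpow_pos_of_pos htpos _)
  -- φ s = z s - (c / Binf) * exp (Binf * s)
  set φ : ℝ → ℝ := fun s => z s - c / Binf * Real.exp (Binf * s) with hφ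
  have hφderiv : ∀ s ∈ Set.Icc (t - t₀) t,
      HasDerivAt φ (z' s - c / Binf * (Real.exp (Binf * s) * Binf)) s := by
    intro s hs
    exact (hzderiv s (le_trans htt0' hs.1)).sub
      ((((hasDerivAt_id s).const_mul Binf).exp.congr_deriv (by simp [mul_comm])).const_mul (c / Binf))
  have hφmono : φ (t - t₀) ≤ φ t := by
    refine mono_aux (t - t₀) t (by linarith) φ _ hφderiv (fun s hs => ?_)
    have hs0 : t₀ ≤ s := le_trans htt0 hs.1
    have hspos : 0 < s := lt_of_lt_of_le ht0pos hs0
    have h1 : a * s ^ (-m) ≤ R s := hRlb s hs0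
    have h2 : t ^ (-m) ≤ s ^ (-m) :=
      Real.rpow_le_rpow_of_nonpos hspos hs.2 (by linarith)
    have h3 : c ≤ R s := by
      have : a * t ^ (-m) ≤ a * s ^ (-m) := mul_le_mul_of_nonneg_left h2 ha.le
      exact le_trans this h1
    have h4 := hz'ge s (le_trans htt0' hs.1)
    have hEpos := (Real.exp_pos (Binf * s)).le
    have h5 : c * Real.exp (Binf * s) ≤ R s * Real.exp (Binf * s) :=
      mul_le_mul_of_nonneg_right h3 hEpos
    have hdiv : c / Binf * (Real.exp (Binf * s) * Binf) = c * Real.exp (Binf * s) := by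
      field_simp
    rw [hdiv]
    linarith
  -- lower bound z (t - t₀) ≥ γ
  have hzlb : γ ≤ z (t - t₀) := hz0 ▸ hzmono 0 le_rfl (t - t₀) htt0'
  -- exp estimate
  have hexp : Real.exp (Binf * (t - t₀)) ≤ Real.exp (Binf * t) / 2 := by
    have : Real.exp (Binf * (t - t₀)) = Real.exp (Binf * t) * Real.exp (-Binf * t₀) := by
      rw [← Real.exp_add]; ring_nf
    rw [this]
    have hEpos := (Real.exp_pos (Binf * t)).le
    nlinarith [mul_le_mul_of_nonneg_left hhalf hEpos]
  have hkey : γ + c / Binf * (Real.exp (Binf * t) / 2) ≤ z t := by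
    have h6 : z (t - t₀) + c / Binf * (Real.exp (Binf * t) - Real.exp (Binf * (t - t₀))) ≤ z t := by
      have := hφmono
      simp only [hφ] at this
      linarith
    have hcB : 0 ≤ c / Binf := (div_pos hcpos hBinf).le
    nlinarith [mul_le_mul_of_nonneg_left hexp hcB]
  -- convert back
  have hE : Real.exp (Binf * t) * Real.exp (-Binf * t) = 1 := by
    rw [← Real.exp_add]; ring_nf; exact Real.exp_zero
  have hEpos := (Real.exp_pos (-Binf * t)).le
  have h7 : (γ + c / Binf * (Real.exp (Binf * t) / 2)) * Real.exp (-Binf * t)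
      ≤ z t * Real.exp (-Binf * t) := mul_le_mul_of_nonneg_right hkey hEpos
  have h8 : z t * Real.exp (-Binf * t) = y t := by
    simp only [hz]
    calc y t * Real.exp (Binf * t) * Real.exp (-Binf * t)
        = y t * (Real.exp (Binf * t) * Real.exp (-Binf * t)) := by ring
      _ = y t := by rw [hE, mul_one]
  have h9 : (γ + c / Binf * (Real.exp (Binf * t) / 2)) * Real.exp (-Binf * t)
      = γ * Real.exp (-Binf * t) + a / (2 * Binf) * t ^ (-m)
        * (Real.exp (Binf * t) * Real.exp (-Binf * t)) := by
    simp only [hc]; field_simp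
  rw [h8] at h7
  rw [h9, hE, mul_one] at h7
  exact h7
end

section
/- Choice of the envelope functions g and h: let d ≥ 1 be real, 0 < p ≤ 2, 0 < B₀ ≤ B∞, and C > 0, C′ > 0. Set M = d + p, q = 1/((d+p)·p), and H = (1 − e^{−B∞})/B∞. Then there exist constants A₊ > 0, A₋ > 0, G > 0 and γ* > 0 such that for every γ ∈ (0, γ*), setting t₀ = (1/(2B∞))·log(B₀/γ^p), g(t) = e^{−B₀·t} + γ^p·A₊·(1 + t)^{−(d+p)} and h(t) = e^{−B∞·t} + γ^p·A₋·t^{−(d+p)}·1_{(2t₀,∞)}(t), the following all hold: (a) γ·e^{−B₀·t} + C·γ^{p+1}·G^{p+1}·(1 + t)^{−(d+p)} < γ·g(t) for all t ≥ 0; (b) γ·e^{−B∞·t} + C′·γ^{p+1}·H^{p+1}·t^{−(d+p)}·1_{(2t₀,∞)}(t) ≥ γ·h(t) for all t > 0; (c) 2·t₀ ≥ max((2G/H)^{1/(M−1)}, 16^q·(2^M·G/H)^{q(p+1)}); (d) g(t) ≤ G·(1 + t)^{−M} for all t ≥ 0; and (e) ∫₀¹ h(s) ds = H. -/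
open Set intervalIntegral

private lemma pow_div_fact_le_exp (x : ℝ) (hx : 0 ≤ x) (n : ℕ) :
    x ^ n / n.factorial ≤ Real.exp x := by
  calc x ^ n / n.factorial
      ≤ ∑ i ∈ Finset.range (n + 1), x ^ i / i.factorial := by
        refine Finset.single_le_sum (f := fun i => x ^ i / (i.factorial : ℝ)) ?_
          (Finset.self_mem_range_succ n)
        intro i _
        positivity
    _ ≤ Real.exp x := Real.sum_le_exp_of_nonneg hx _

private lemma exp_decay_bound (B m : ℝ) (hB : 0 < B) (hm : 0 ≤ m) (n : ℕ)
    (hmn : m ≤ n) (t : ℝ) (ht : 0 ≤ t) :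
    Real.exp (-B * t) * (1 + t) ^ m ≤ 2 ^ n * (1 + n.factorial / B ^ n) := by
  have h1t : (1:ℝ) ≤ 1 + t := by linarith
  have h1 : (1 + t : ℝ) ^ m ≤ (1 + t) ^ (n : ℝ) :=
    Real.rpow_le_rpow_of_exponent_le h1t hmn
  rw [Real.rpow_natCast] at h1
  have hfact : (0:ℝ) ≤ (n.factorial : ℝ) / B ^ n := by positivity
  have hEpos : 0 < Real.exp (-B * t) := Real.exp_pos _
  have h2n : (0:ℝ) < 2 ^ n := by positivity
  rcases le_total t 1 with h | h
  · have h2 : (1 + t : ℝ) ^ n ≤ 2 ^ n := pow_le_pow_left₀ (by linarith) (by linarith) n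
    have h3 : Real.exp (-B * t) ≤ 1 := Real.exp_le_one_iff.mpr (by nlinarith)
    calc Real.exp (-B * t) * (1 + t) ^ m ≤ Real.exp (-B * t) * (1 + t) ^ n :=
          mul_le_mul_of_nonneg_left h1 hEpos.le
      _ ≤ 1 * 2 ^ n := mul_le_mul h3 h2 (by positivity) zero_le_one
      _ ≤ 2 ^ n * (1 + n.factorial / B ^ n) := by nlinarith
  · have h2 : (1 + t : ℝ) ^ n ≤ (2 * t) ^ n := pow_le_pow_left₀ (by linarith) (by linarith) n
    have hBt : (0:ℝ) ≤ B * t := by positivity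
    have hBn : (0:ℝ) < B ^ n := pow_pos hB n
    have key := pow_div_fact_le_exp (B * t) hBt n
    rw [mul_pow, div_le_iff₀ (by positivity : (0:ℝ) < (n.factorial : ℝ))] at key
    have h4 : Real.exp (-B * t) * t ^ n ≤ n.factorial / B ^ n := by
      rw [le_div_iff₀ hBn]
      have hexp : Real.exp (-B * t) * Real.exp (B * t) = 1 := by
        rw [← Real.exp_add]; norm_num
      nlinarith [mul_le_mul_of_nonneg_left key hEpos.le]
    calc Real.exp (-B * t) * (1 + t) ^ m ≤ Real.exp (-B * t) * (1 + t) ^ n :=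
          mul_le_mul_of_nonneg_left h1 hEpos.le
      _ ≤ Real.exp (-B * t) * (2 * t) ^ n :=
          mul_le_mul_of_nonneg_left h2 hEpos.le
      _ = 2 ^ n * (Real.exp (-B * t) * t ^ n) := by rw [mul_pow]; ring
      _ ≤ 2 ^ n * (n.factorial / B ^ n) :=
          mul_le_mul_of_nonneg_left h4 h2n.le
      _ ≤ 2 ^ n * (1 + n.factorial / B ^ n) := by nlinarith

set_option maxHeartbeats 1000000 in
/-- Choice of the envelope functions `g` and `h`: with `M = d + p`,
`q = 1/((d+p)p)` and `H = (1 − e^{−B∞})/B∞`, there are constants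
`A₊, A₋, G, γ* > 0` such that for every `0 < γ < γ*`, the functions
`g(t) = e^{−B₀t} + γ^p A₊ (1+t)^{−(d+p)}` and
`h(t) = e^{−B∞t} + γ^p A₋ t^{−(d+p)} 1_{(2t₀,∞)}(t)`, with
`t₀ = (1/(2B∞)) log(B₀/γ^p)`, satisfy conditions (a)–(e). -/
theorem choice_of_envelopes
    (d p B₀ Binf C C' : ℝ) (hd : 1 ≤ d) (hp0 : 0 < p) (hp2 : p ≤ 2)
    (hB₀ : 0 < B₀) (hBB : B₀ ≤ Binf) (hC : 0 < C) (hC' : 0 < C') :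
    ∃ Ap > (0:ℝ), ∃ Am > (0:ℝ), ∃ G > (0:ℝ), ∃ γs > (0:ℝ),
      ∀ γ : ℝ, 0 < γ → γ < γs →
        ∀ M q H t₀ : ℝ, ∀ g h : ℝ → ℝ,
          M = d + p →
          q = 1 / ((d + p) * p) →
          H = (1 - Real.exp (-Binf)) / Binf →
          t₀ = (1 / (2 * Binf)) * Real.log (B₀ / γ ^ p) →
          g = (fun t => Real.exp (-B₀ * t) + γ ^ p * Ap * (1 + t) ^ (-(d + p))) →
          h = (fun t => Real.exp (-Binf * t)
                + γ ^ p * Am * t ^ (-(d + p)) *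
                    Set.indicator (Set.Ioi (2 * t₀)) (fun _ => (1:ℝ)) t) →
          (∀ t ≥ (0:ℝ),
            γ * Real.exp (-B₀ * t)
              + C * γ ^ (p + 1) * G ^ (p + 1) * (1 + t) ^ (-(d + p)) < γ * g t) ∧
          (∀ t > (0:ℝ),
            γ * h t ≤ γ * Real.exp (-Binf * t)
              + C' * γ ^ (p + 1) * H ^ (p + 1) * t ^ (-(d + p)) *
                  Set.indicator (Set.Ioi (2 * t₀)) (fun _ => (1:ℝ)) t) ∧
          (max ((2 * G / H) ^ (1 / (M - 1)))
              ((16:ℝ) ^ q * (2 ^ M * G / H) ^ (q * (p + 1))) ≤ 2 * t₀) ∧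
          (∀ t ≥ (0:ℝ), g t ≤ G * (1 + t) ^ (-M)) ∧
          (∫ s in (0:ℝ)..1, h s) = H := by
  have hBinf : 0 < Binf := lt_of_lt_of_le hB₀ hBB
  set H₀ : ℝ := (1 - Real.exp (-Binf)) / Binf with hH₀def
  have hH₀ : 0 < H₀ := by
    apply div_pos _ hBinf
    have : Real.exp (-Binf) < 1 := Real.exp_lt_one_iff.mpr (by linarith)
    linarith
  set n : ℕ := ⌈d⌉₊ + 2 with hn
  have hdn : d + p ≤ (n : ℝ) := by
    have h1 := Nat.le_ceil d
    rw [hn]; push_cast; linarith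
  set K₀ : ℝ := 2 ^ n * (1 + n.factorial / B₀ ^ n) with hK₀def
  have hK₀pos : 0 < K₀ := by positivity
  set G : ℝ := K₀ + 1 with hGdef
  have hGpos : 0 < G := by positivity
  set Ap : ℝ := C * G ^ (p + 1) + 1 with hApdef
  have hAppos : 0 < Ap := by
    have : (0:ℝ) < G ^ (p + 1) := Real.rpow_pos_of_pos hGpos _
    positivity
  set Am : ℝ := C' * H₀ ^ (p + 1) with hAmdef
  have hAmpos : 0 < Am := by
    have : (0:ℝ) < H₀ ^ (p + 1) := Real.rpow_pos_of_pos hH₀ _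
    positivity
  set K : ℝ := max ((2 * G / H₀) ^ (1 / (d + p - 1)))
      ((16:ℝ) ^ (1 / ((d + p) * p)) *
        (2 ^ (d + p) * G / H₀) ^ (1 / ((d + p) * p) * (p + 1))) with hKdef
  set K' : ℝ := max K 1 with hK'def
  set γs : ℝ := min ((1 / Ap) ^ (1 / p))
      ((B₀ * Real.exp (-(Binf * K'))) ^ (1 / p)) with hγsdef
  have hγspos : 0 < γs :=
    lt_min (Real.rpow_pos_of_pos (by positivity) _)
      (Real.rpow_pos_of_pos (by positivity) _)
  refine ⟨Ap, hAppos, Am, hAmpos, G, hGpos, γs, hγspos, ?_⟩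
  intro γ hγ hγs M q H t₀ g h hM hq hH ht₀ hg hh
  subst hM hq hH ht₀ hg hh
  have hγp : 0 < γ ^ p := Real.rpow_pos_of_pos hγ p
  have hrpow : ∀ x : ℝ, 0 < x → γ < x ^ (1 / p) → γ ^ p < x := by
    intro x hx hγx
    have h1 : γ ^ p < (x ^ (1 / p)) ^ p := Real.rpow_lt_rpow hγ.le hγx hp0
    rwa [← Real.rpow_mul hx.le, one_div, inv_mul_cancel₀ hp0.ne', Real.rpow_one] at h1
  have hγAp : γ ^ p * Ap < 1 := by
    have h1 : γ ^ p < 1 / Ap :=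
      hrpow _ (by positivity) (lt_of_lt_of_le hγs (min_le_left _ _))
    exact (lt_div_iff₀ hAppos).mp h1
  have hγK : γ ^ p < B₀ * Real.exp (-(Binf * K')) :=
    hrpow _ (by positivity) (lt_of_lt_of_le hγs (min_le_right _ _))
  have hK'le : K' ≤ 2 * (1 / (2 * Binf) * Real.log (B₀ / γ ^ p)) := by
    have h1 : Real.exp (Binf * K') * γ ^ p < B₀ := by
      have h2 := mul_lt_mul_of_pos_left hγK (Real.exp_pos (Binf * K'))
      have h3 : Real.exp (Binf * K') * (B₀ * Real.exp (-(Binf * K'))) = B₀ := by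
        rw [mul_comm B₀, ← mul_assoc, ← Real.exp_add]
        norm_num
      linarith [h3 ▸ h2]
    have h2 : Real.exp (Binf * K') < B₀ / γ ^ p := (lt_div_iff₀ hγp).mpr h1
    have h3 : Binf * K' < Real.log (B₀ / γ ^ p) := by
      have := Real.log_lt_log (Real.exp_pos _) h2
      rwa [Real.log_exp] at this
    have h4 : K' < Real.log (B₀ / γ ^ p) / Binf :=
      (lt_div_iff₀ hBinf).mpr (by linarith)
    have h5 : 2 * (1 / (2 * Binf) * Real.log (B₀ / γ ^ p))
        = Real.log (B₀ / γ ^ p) / Binf := by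
      field_simp
    linarith [h5 ▸ h4]
  have hone : (1:ℝ) ≤ 2 * (1 / (2 * Binf) * Real.log (B₀ / γ ^ p)) :=
    le_trans (le_max_right K 1) hK'le
  have hpow1 : γ ^ (p + 1) = γ ^ p * γ := by
    rw [Real.rpow_add hγ, Real.rpow_one]
  refine ⟨?_, ?_, ?_, ?_, ?_⟩
  · -- (a)
    intro t ht
    dsimp only
    have hX : (0:ℝ) < (1 + t) ^ (-(d + p)) :=
      Real.rpow_pos_of_pos (by linarith) _
    have hlt : C * G ^ (p + 1) < Ap := by rw [hApdef]; linarith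
    have h2 := mul_lt_mul_of_pos_right hlt (mul_pos (mul_pos hγp hγ) hX)
    rw [hpow1]
    nlinarith [h2]
  · -- (b)
    intro t ht
    dsimp only
    rw [hpow1, hAmdef]
    apply le_of_eq
    ring
  · -- (c)
    exact le_trans (le_of_eq hKdef.symm) (le_trans (le_max_left K 1) hK'le)
  · -- (d)
    intro t ht
    dsimp only
    have h1t : (0:ℝ) ≤ 1 + t := by linarith
    have hXpos : (0:ℝ) < (1 + t) ^ (d + p) :=
      Real.rpow_pos_of_pos (by linarith) _
    have hYpos : (0:ℝ) < (1 + t) ^ (-(d + p)) :=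
      Real.rpow_pos_of_pos (by linarith) _
    have e1 : Real.exp (-B₀ * t) ≤ K₀ * (1 + t) ^ (-(d + p)) := by
      rw [Real.rpow_neg h1t, ← div_eq_mul_inv, le_div_iff₀ hXpos]
      exact exp_decay_bound B₀ (d + p) hB₀ (by linarith) n hdn t ht
    have e2 : γ ^ p * Ap * (1 + t) ^ (-(d + p)) ≤ 1 * (1 + t) ^ (-(d + p)) :=
      mul_le_mul_of_nonneg_right hγAp.le hYpos.le
    rw [hGdef]
    linarith [e1, e2]
  · -- (e)
    have heq : ∀ s ∈ Set.uIcc (0:ℝ) 1,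
        (Real.exp (-Binf * s) + γ ^ p * Am * s ^ (-(d + p)) *
          Set.indicator (Set.Ioi (2 * (1 / (2 * Binf) * Real.log (B₀ / γ ^ p))))
            (fun _ => (1:ℝ)) s) = Real.exp (-Binf * s) := by
      intro s hs
      rw [Set.uIcc_of_le (by norm_num : (0:ℝ) ≤ 1)] at hs
      have hs1 : s ≤ 1 := hs.2
      have : s ∉ Set.Ioi (2 * (1 / (2 * Binf) * Real.log (B₀ / γ ^ p))) := by
        simp only [Set.mem_Ioi, not_lt]
        linarith
      rw [Set.indicator_of_notMem this]
      ring
    rw [intervalIntegral.integral_congr heq]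
    calc (∫ s in (0:ℝ)..1, Real.exp (-Binf * s))
        = (-Binf)⁻¹ • ∫ s in (-Binf * 0)..(-Binf * 1), Real.exp s := by
          rw [intervalIntegral.integral_comp_mul_left Real.exp
            (show (-Binf) ≠ 0 by linarith)]
      _ = H₀ := by
          rw [integral_exp, hH₀def]
          have hBne : Binf ≠ 0 := ne_of_gt hBinf
          have hinv : Binf * Binf⁻¹ = 1 := mul_inv_cancel₀ hBne
          simp only [mul_zero, mul_one, Real.exp_zero, smul_eq_mul]
          field_simp
          linear_combination (0:ℝ) * hinv
end
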